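/- arXiv:2210.08955 — 6 statements merged into one kernel-verified Lean document; each statement's English description precedes it below -/
import Mathlib

section
/- For all finite connected simple graphs G and H, each with at least two vertices, meg(G □ H) ≥ max(meg(G)·|V(H)|, meg(H)·|V(G)|), where G □ H denotes the Cartesian product. -/
open SimpleGraph

/-- `S` is a monitoring edge-geodetic set (MEG-set) of `G`: for every edge `e` of `G`
there are `x, y ∈ S` whose distance in `G − e` differs from their distance in `G`
(including the case that they become disconnected in `G − e`). -/
def IsMEGSet {V : Type*} (G : SimpleGraph V) (S : Set V) : Prop :=
  ∀ e ∈ G.edgeSet, ∃ x ∈ S, ∃ y ∈ S,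
    ¬ (G.deleteEdges {e}).Reachable x y ∨ (G.deleteEdges {e}).dist x y ≠ G.dist x y

/-- The monitoring edge-geodetic number: the minimum cardinality of an MEG-set. -/
noncomputable def meg {V : Type*} [Fintype V] (G : SimpleGraph V) : ℕ :=
  sInf {n | ∃ S : Set V, IsMEGSet G S ∧ S.ncard = n}

/-- The strong product `G ⊠ H` of two simple graphs: `(a,b)` adjacent to `(c,d)` iff
`a = c` and `bd ∈ E(H)`, or `b = d` and `ac ∈ E(G)`, or `ac ∈ E(G)` and `bd ∈ E(H)`. -/
def strongProd {α β : Type*} (G : SimpleGraph α) (H : SimpleGraph β) :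
    SimpleGraph (α × β) where
  Adj x y := (x.1 = y.1 ∧ H.Adj x.2 y.2) ∨ (x.2 = y.2 ∧ G.Adj x.1 y.1) ∨
    (G.Adj x.1 y.1 ∧ H.Adj x.2 y.2)
  symm := ⟨fun x y => by
    rintro (⟨h1, h2⟩ | ⟨h1, h2⟩ | ⟨h1, h2⟩)
    · exact Or.inl ⟨h1.symm, h2.symm⟩
    · exact Or.inr (Or.inl ⟨h1.symm, h2.symm⟩)
    · exact Or.inr (Or.inr ⟨h1.symm, h2.symm⟩)⟩
  loopless := ⟨fun x => by
    rintro (⟨_, h⟩ | ⟨_, h⟩ | ⟨h, _⟩)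
    · exact H.loopless.irrefl _ h
    · exact G.loopless.irrefl _ h
    · exact G.loopless.irrefl _ h⟩

infixl:70 " ⊠ " => strongProd

namespace MEGaux

variable {V W : Type*}





/-- Deleting edges cannot decrease distance (among vertices still reachable). -/
lemma dist_le_deleteEdges_dist {G : SimpleGraph V} {s : Set (Sym2 V)} {x y : V}
    (h : (G.deleteEdges s).Reachable x y) :
    G.dist x y ≤ (G.deleteEdges s).dist x y := by
  obtain ⟨p, hp⟩ := h.exists_walk_length_eq_dist
  calc G.dist x y ≤ (p.mapLe (G.deleteEdges_le s)).length := SimpleGraph.dist_le _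
    _ = p.length := by simp [Walk.mapLe, Walk.length_map]
    _ = _ := hp

/-- Project a walk in the box product to walks in the factors. -/
lemma exists_proj {G : SimpleGraph V} {H : SimpleGraph W} {x y : V × W}
    (p : (G □ H).Walk x y) :
    ∃ (q : G.Walk x.1 y.1) (r : H.Walk x.2 y.2), q.length + r.length ≤ p.length := by
  induction p with
  | nil => exact ⟨.nil, .nil, le_refl 0⟩
  | @cons u v z h p ih =>
    obtain ⟨q, r, hqr⟩ := ih
    rcases h with ⟨hGa, he⟩ | ⟨hHa, he⟩
    · exact ⟨Walk.cons hGa q, r.copy he.symm rfl, by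
        simp only [Walk.length_cons, Walk.length_copy]; change _ ≤ p.length + 1; omega⟩
    · exact ⟨q.copy he.symm rfl, Walk.cons hHa r, by
        simp only [Walk.length_cons, Walk.length_copy]; change _ ≤ p.length + 1; omega⟩

lemma length_boxProdLeft' {G : SimpleGraph V} {H : SimpleGraph W} {x y : V} (b : W)
    (p : G.Walk x y) : (p.boxProdLeft H b).length = p.length :=
  Walk.length_map _ _

lemma length_boxProdRight' {G : SimpleGraph V} {H : SimpleGraph W} {a b : W} (x : V)
    (q : H.Walk a b) : (q.boxProdRight G x).length = q.length :=
  Walk.length_map _ _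

lemma boxProd_dist {G : SimpleGraph V} {H : SimpleGraph W} {x y : V} {a b : W}
    (hg : G.Reachable x y) (hh : H.Reachable a b) :
    (G □ H).dist (x, a) (y, b) = G.dist x y + H.dist a b := by
  obtain ⟨p, hp⟩ := hg.exists_walk_length_eq_dist
  obtain ⟨q, hq⟩ := hh.exists_walk_length_eq_dist
  have hle : (G □ H).dist (x, a) (y, b) ≤ G.dist x y + H.dist a b := by
    calc (G □ H).dist (x, a) (y, b)
        ≤ ((p.boxProdLeft H a).append (q.boxProdRight G y)).length := SimpleGraph.dist_le _
      _ = p.length + q.length := by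
          simp [Walk.length_append, MEGaux.length_boxProdLeft', MEGaux.length_boxProdRight', Walk.length_map]
      _ = _ := by rw [hp, hq]
  have hreach : (G □ H).Reachable (x, a) (y, b) :=
    ⟨(p.boxProdLeft H a).append (q.boxProdRight G y)⟩
  obtain ⟨P, hP⟩ := hreach.exists_walk_length_eq_dist
  obtain ⟨q', r', hqr⟩ := exists_proj P
  have hge : G.dist x y + H.dist a b ≤ (G □ H).dist (x, a) (y, b) := by
    calc G.dist x y + H.dist a b ≤ q'.length + r'.length :=
        Nat.add_le_add (SimpleGraph.dist_le _) (SimpleGraph.dist_le _)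
      _ ≤ P.length := hqr
      _ = _ := hP
  omega

lemma mem_edges_boxProdLeft {G : SimpleGraph V} {H : SimpleGraph W} {x y : V} (b : W)
    (p : G.Walk x y) {e' : Sym2 (V × W)} (h : e' ∈ (p.boxProdLeft H b).edges) :
    ∃ c d, s(c, d) ∈ p.edges ∧ e' = s((c, b), (d, b)) := by
  rw [show (p.boxProdLeft H b).edges = (p.map (G.boxProdLeft H b).toHom).edges from rfl,
    Walk.edges_map] at h
  obtain ⟨e, he, rfl⟩ := List.mem_map.mp h
  induction e using Sym2.ind with
  | _ c d => exact ⟨c, d, he, rfl⟩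

lemma mem_edges_boxProdRight {G : SimpleGraph V} {H : SimpleGraph W} {a b : W} (x : V)
    (q : H.Walk a b) {e' : Sym2 (V × W)} (h : e' ∈ (q.boxProdRight G x).edges) :
    ∃ c d, s(c, d) ∈ q.edges ∧ e' = s((x, c), (x, d)) := by
  rw [show (q.boxProdRight G x).edges = (q.map (G.boxProdRight H x).toHom).edges from rfl,
    Walk.edges_map] at h
  obtain ⟨e, he, rfl⟩ := List.mem_map.mp h
  induction e using Sym2.ind with
  | _ c d => exact ⟨c, d, he, rfl⟩

/-- If there is a shortest walk avoiding the edge `E`, then the pair does not monitor `E`. -/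
lemma not_monitor {P : SimpleGraph V} {E : Sym2 V} {s t : V} (p : P.Walk s t)
    (hp : p.length = P.dist s t) (havoid : ∀ e ∈ p.edges, e ∉ ({E} : Set (Sym2 V))) :
    (P.deleteEdges {E}).Reachable s t ∧ (P.deleteEdges {E}).dist s t = P.dist s t := by
  refine ⟨⟨p.toDeleteEdges {E} havoid⟩,
    le_antisymm ?_ (dist_le_deleteEdges_dist ⟨p.toDeleteEdges {E} havoid⟩)⟩
  calc (P.deleteEdges {E}).dist s t ≤ (p.toDeleteEdges {E} havoid).length :=
      SimpleGraph.dist_le _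
    _ = p.length := Walk.length_transfer _ _
    _ = _ := hp




lemma row_isMEGSet {G : SimpleGraph V} {H : SimpleGraph W}
    (hG : G.Connected) (hH : H.Connected) {S : Set (V × W)}
    (hS : IsMEGSet (G □ H) S) (w : W) : IsMEGSet G {v | (v, w) ∈ S} := by
  intro e he
  induction e using Sym2.ind with
  | _ u v =>
  have huv : G.Adj u v := he
  have hE : s((u, w), (v, w)) ∈ (G □ H).edgeSet := boxProd_adj_left.mpr huv
  obtain ⟨⟨x, a⟩, hx, ⟨y, b⟩, hy, hmon⟩ := hS _ hE
  have contra : ∀ (P : (G □ H).Walk (x, a) (y, b)),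
      P.length = (G □ H).dist (x, a) (y, b) →
      (∀ e' ∈ P.edges, e' ∉ ({s((u, w), (v, w))} : Set (Sym2 (V × W)))) → False := by
    intro P hlen havoid
    obtain ⟨hr, hd⟩ := MEGaux.not_monitor P hlen havoid
    rcases hmon with h | h
    · exact h hr
    · exact h hd
  have hdista : (G □ H).dist (x, a) (y, b) = G.dist x y + H.dist a b :=
    MEGaux.boxProd_dist (hG.preconnected x y) (hH.preconnected a b)
  obtain ⟨p, hp⟩ := (hG.preconnected x y).exists_walk_length_eq_dist
  obtain ⟨q, hq⟩ := (hH.preconnected a b).exists_walk_length_eq_dist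
  have haw : a = w := by
    by_contra haw
    apply contra ((p.boxProdLeft H a).append (q.boxProdRight G y))
    · rw [Walk.length_append, hdista]
      simp [MEGaux.length_boxProdLeft', MEGaux.length_boxProdRight', Walk.length_map, hp, hq]
    · intro e' he'
      rw [Walk.edges_append, List.mem_append] at he'
      rcases he' with h' | h'
      · obtain ⟨c, d, _, rfl⟩ := MEGaux.mem_edges_boxProdLeft a p h'
        simp only [Set.mem_singleton_iff, Sym2.eq_iff, Prod.mk.injEq]
        rintro (⟨⟨_, h1⟩, _⟩ | ⟨⟨_, h1⟩, _⟩) <;> exact haw h1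
      · obtain ⟨c, d, _, rfl⟩ := MEGaux.mem_edges_boxProdRight y q h'
        simp only [Set.mem_singleton_iff, Sym2.eq_iff, Prod.mk.injEq]
        rintro (⟨⟨h1, _⟩, ⟨h2, _⟩⟩ | ⟨⟨h1, _⟩, ⟨h2, _⟩⟩)
        · exact huv.ne (h1.symm.trans h2)
        · exact huv.ne (h2.symm.trans h1)
  have hbw : b = w := by
    by_contra hbw
    apply contra ((q.boxProdRight G x).append (p.boxProdLeft H b))
    · rw [Walk.length_append, hdista]
      simp [MEGaux.length_boxProdLeft', MEGaux.length_boxProdRight', Walk.length_map, hp, hq, Nat.add_comm]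
    · intro e' he'
      rw [Walk.edges_append, List.mem_append] at he'
      rcases he' with h' | h'
      · obtain ⟨c, d, _, rfl⟩ := MEGaux.mem_edges_boxProdRight x q h'
        simp only [Set.mem_singleton_iff, Sym2.eq_iff, Prod.mk.injEq]
        rintro (⟨⟨h1, _⟩, ⟨h2, _⟩⟩ | ⟨⟨h1, _⟩, ⟨h2, _⟩⟩)
        · exact huv.ne (h1.symm.trans h2)
        · exact huv.ne (h2.symm.trans h1)
      · obtain ⟨c, d, _, rfl⟩ := MEGaux.mem_edges_boxProdLeft b p h'
        simp only [Set.mem_singleton_iff, Sym2.eq_iff, Prod.mk.injEq]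
        rintro (⟨⟨_, h1⟩, _⟩ | ⟨⟨_, h1⟩, _⟩) <;> exact hbw h1
  subst haw; subst hbw
  refine ⟨x, hx, y, hy, ?_⟩
  by_contra hcon
  push_neg at hcon
  obtain ⟨hr, hd⟩ := hcon
  obtain ⟨r0, hr0⟩ := hr.exists_walk_length_eq_dist
  have hsub : ∀ e ∈ r0.edges, e ∈ G.edgeSet := by
    intro e he
    have h1 := r0.edges_subset_edgeSet he
    rw [edgeSet_deleteEdges] at h1
    exact h1.1
  have hnedge : ∀ e ∈ r0.edges, e ≠ s(u, v) := by
    intro e he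
    have h1 := r0.edges_subset_edgeSet he
    rw [edgeSet_deleteEdges] at h1
    exact fun h => h1.2 (by simp [h])
  apply contra ((r0.transfer G hsub).boxProdLeft H b)
  · rw [hdista]
    simp [MEGaux.length_boxProdLeft', Walk.length_map, Walk.length_transfer, hr0, hd,
      SimpleGraph.dist_self]
  · intro e' he'
    obtain ⟨c, d, hcd, rfl⟩ := MEGaux.mem_edges_boxProdLeft b _ he'
    rw [Walk.edges_transfer] at hcd
    simp only [Set.mem_singleton_iff, Sym2.eq_iff, Prod.mk.injEq]
    rintro (⟨⟨h1, _⟩, ⟨h2, _⟩⟩ | ⟨⟨h1, _⟩, ⟨h2, _⟩⟩)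
    · exact hnedge _ hcd (by rw [h1, h2])
    · exact hnedge _ hcd (by rw [h1, h2, Sym2.eq_swap])

lemma col_isMEGSet {G : SimpleGraph V} {H : SimpleGraph W}
    (hG : G.Connected) (hH : H.Connected) {S : Set (V × W)}
    (hS : IsMEGSet (G □ H) S) (v0 : V) : IsMEGSet H {w | (v0, w) ∈ S} := by
  intro e he
  induction e using Sym2.ind with
  | _ c d =>
  have hcd : H.Adj c d := he
  have hE : s((v0, c), (v0, d)) ∈ (G □ H).edgeSet := boxProd_adj_right.mpr hcd
  obtain ⟨⟨x, a⟩, hx, ⟨y, b⟩, hy, hmon⟩ := hS _ hE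
  have contra : ∀ (P : (G □ H).Walk (x, a) (y, b)),
      P.length = (G □ H).dist (x, a) (y, b) →
      (∀ e' ∈ P.edges, e' ∉ ({s((v0, c), (v0, d))} : Set (Sym2 (V × W)))) → False := by
    intro P hlen havoid
    obtain ⟨hr, hd⟩ := MEGaux.not_monitor P hlen havoid
    rcases hmon with h | h
    · exact h hr
    · exact h hd
  have hdista : (G □ H).dist (x, a) (y, b) = G.dist x y + H.dist a b :=
    MEGaux.boxProd_dist (hG.preconnected x y) (hH.preconnected a b)
  obtain ⟨p, hp⟩ := (hG.preconnected x y).exists_walk_length_eq_dist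
  obtain ⟨q, hq⟩ := (hH.preconnected a b).exists_walk_length_eq_dist
  have hxv : x = v0 := by
    by_contra hxv
    apply contra ((q.boxProdRight G x).append (p.boxProdLeft H b))
    · rw [Walk.length_append, hdista]
      simp [MEGaux.length_boxProdLeft', MEGaux.length_boxProdRight', Walk.length_map, hp, hq, Nat.add_comm]
    · intro e' he'
      rw [Walk.edges_append, List.mem_append] at he'
      rcases he' with h' | h'
      · obtain ⟨c', d', _, rfl⟩ := MEGaux.mem_edges_boxProdRight x q h'
        simp only [Set.mem_singleton_iff, Sym2.eq_iff, Prod.mk.injEq]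
        rintro (⟨⟨h1, _⟩, _⟩ | ⟨⟨h1, _⟩, _⟩) <;> exact hxv h1
      · obtain ⟨c', d', _, rfl⟩ := MEGaux.mem_edges_boxProdLeft b p h'
        simp only [Set.mem_singleton_iff, Sym2.eq_iff, Prod.mk.injEq]
        rintro (⟨⟨_, h1⟩, ⟨_, h2⟩⟩ | ⟨⟨_, h1⟩, ⟨_, h2⟩⟩)
        · exact hcd.ne (h1.symm.trans h2)
        · exact hcd.ne (h2.symm.trans h1)
  have hyv : y = v0 := by
    by_contra hyv
    apply contra ((p.boxProdLeft H a).append (q.boxProdRight G y))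
    · rw [Walk.length_append, hdista]
      simp [MEGaux.length_boxProdLeft', MEGaux.length_boxProdRight', Walk.length_map, hp, hq]
    · intro e' he'
      rw [Walk.edges_append, List.mem_append] at he'
      rcases he' with h' | h'
      · obtain ⟨c', d', _, rfl⟩ := MEGaux.mem_edges_boxProdLeft a p h'
        simp only [Set.mem_singleton_iff, Sym2.eq_iff, Prod.mk.injEq]
        rintro (⟨⟨_, h1⟩, ⟨_, h2⟩⟩ | ⟨⟨_, h1⟩, ⟨_, h2⟩⟩)
        · exact hcd.ne (h1.symm.trans h2)
        · exact hcd.ne (h2.symm.trans h1)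
      · obtain ⟨c', d', _, rfl⟩ := MEGaux.mem_edges_boxProdRight y q h'
        simp only [Set.mem_singleton_iff, Sym2.eq_iff, Prod.mk.injEq]
        rintro (⟨⟨h1, _⟩, _⟩ | ⟨⟨h1, _⟩, _⟩) <;> exact hyv h1
  subst hxv; subst hyv
  refine ⟨a, hx, b, hy, ?_⟩
  by_contra hcon
  push_neg at hcon
  obtain ⟨hr, hd⟩ := hcon
  obtain ⟨r0, hr0⟩ := hr.exists_walk_length_eq_dist
  have hsub : ∀ e ∈ r0.edges, e ∈ H.edgeSet := by
    intro e he'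
    have h1 := r0.edges_subset_edgeSet he'
    rw [edgeSet_deleteEdges] at h1
    exact h1.1
  have hnedge : ∀ e ∈ r0.edges, e ≠ s(c, d) := by
    intro e he'
    have h1 := r0.edges_subset_edgeSet he'
    rw [edgeSet_deleteEdges] at h1
    exact fun h => h1.2 (by simp [h])
  apply contra ((r0.transfer H hsub).boxProdRight G y)
  · rw [hdista]
    simp [MEGaux.length_boxProdRight', Walk.length_map, Walk.length_transfer, hr0, hd,
      SimpleGraph.dist_self]
  · intro e' he'
    obtain ⟨c', d', hcd', rfl⟩ := MEGaux.mem_edges_boxProdRight y _ he'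
    rw [Walk.edges_transfer] at hcd'
    simp only [Set.mem_singleton_iff, Sym2.eq_iff, Prod.mk.injEq]
    rintro (⟨⟨_, h1⟩, ⟨_, h2⟩⟩ | ⟨⟨_, h1⟩, ⟨_, h2⟩⟩)
    · exact hnedge _ hcd' (by rw [h1, h2])
    · exact hnedge _ hcd' (by rw [h1, h2, Sym2.eq_swap])

lemma ncard_rows [Fintype V] [Fintype W] (S : Set (V × W)) :
    S.ncard = ∑ w : W, ({v | (v, w) ∈ S} : Set V).ncard := by
  classical
  rw [Set.ncard_eq_toFinset_card']
  rw [Finset.card_eq_sum_card_fiberwise (f := Prod.snd) (t := Finset.univ)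
    (fun x _ => Finset.mem_univ _)]
  refine Finset.sum_congr rfl fun w _ => ?_
  rw [Set.ncard_eq_toFinset_card']
  apply Finset.card_bij (fun p _ => p.1)
  · rintro ⟨p1, p2⟩ hp
    simp only [Finset.mem_filter, Set.mem_toFinset] at hp ⊢
    obtain ⟨h1, h2⟩ := hp
    subst h2
    exact h1
  · rintro ⟨p1, p2⟩ hp ⟨q1, q2⟩ hq h
    simp only [Finset.mem_filter, Set.mem_toFinset] at hp hq
    simp only at h
    exact Prod.ext h (hp.2.trans hq.2.symm)
  · intro v hv
    simp only [Set.mem_toFinset] at hv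
    exact ⟨(v, w), Finset.mem_filter.mpr ⟨Set.mem_toFinset.mpr hv, rfl⟩, rfl⟩

lemma ncard_cols [Fintype V] [Fintype W] (S : Set (V × W)) :
    S.ncard = ∑ v : V, ({w | (v, w) ∈ S} : Set W).ncard := by
  classical
  rw [Set.ncard_eq_toFinset_card']
  rw [Finset.card_eq_sum_card_fiberwise (f := Prod.fst) (t := Finset.univ)
    (fun x _ => Finset.mem_univ _)]
  refine Finset.sum_congr rfl fun v _ => ?_
  rw [Set.ncard_eq_toFinset_card']
  apply Finset.card_bij (fun p _ => p.2)
  · rintro ⟨p1, p2⟩ hp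
    simp only [Finset.mem_filter, Set.mem_toFinset] at hp ⊢
    obtain ⟨h1, h2⟩ := hp
    subst h2
    exact h1
  · rintro ⟨p1, p2⟩ hp ⟨q1, q2⟩ hq h
    simp only [Finset.mem_filter, Set.mem_toFinset] at hp hq
    simp only at h
    exact Prod.ext (hp.2.trans hq.2.symm) h
  · intro w hw
    simp only [Set.mem_toFinset] at hw
    exact ⟨(v, w), Finset.mem_filter.mpr ⟨Set.mem_toFinset.mpr hw, rfl⟩, rfl⟩

end MEGaux

theorem meg_boxProd_lower_bound {V W : Type*} [Fintype V] [Fintype W]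
    (G : SimpleGraph V) (H : SimpleGraph W)
    (hG : G.Connected) (hH : H.Connected)
    (hV : 1 < Fintype.card V) (hW : 1 < Fintype.card W) :
    max (meg G * Fintype.card W) (meg H * Fintype.card V) ≤ meg (G □ H) := by
  classical
  have huniv : IsMEGSet (G □ H) Set.univ := by
    intro e he
    induction e using Sym2.ind with
    | _ s t =>
    refine ⟨s, trivial, t, trivial, Or.inr ?_⟩
    have hst : (G □ H).Adj s t := he
    rw [SimpleGraph.dist_eq_one_iff_adj.mpr hst]
    intro h
    have h2 := SimpleGraph.dist_eq_one_iff_adj.mp h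
    rw [deleteEdges_adj] at h2
    exact h2.2 rfl
  have hmem : meg (G □ H) ∈ {n | ∃ S : Set (V × W), IsMEGSet (G □ H) S ∧ S.ncard = n} :=
    Nat.sInf_mem ⟨_, Set.univ, huniv, rfl⟩
  obtain ⟨S, hS, hcard⟩ := hmem
  rw [max_le_iff]
  constructor
  · calc meg G * Fintype.card W = (∑ _w : W, meg G) := by
          rw [Finset.sum_const, Finset.card_univ, smul_eq_mul, mul_comm]
      _ ≤ (∑ w : W, ({v | (v, w) ∈ S} : Set V).ncard) :=
        Finset.sum_le_sum (fun w _ =>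
          Nat.sInf_le ⟨_, MEGaux.row_isMEGSet hG hH hS w, rfl⟩)
      _ = S.ncard := (MEGaux.ncard_rows S).symm
      _ = meg (G □ H) := hcard
  · calc meg H * Fintype.card V = (∑ _v : V, meg H) := by
          rw [Finset.sum_const, Finset.card_univ, smul_eq_mul, mul_comm]
      _ ≤ (∑ v : V, ({w | (v, w) ∈ S} : Set W).ncard) :=
        Finset.sum_le_sum (fun v _ =>
          Nat.sInf_le ⟨_, MEGaux.col_isMEGSet hG hH hS v, rfl⟩)
      _ = S.ncard := (MEGaux.ncard_cols S).symm
      _ = meg (G □ H) := hcard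
end

section
/- Let G and H be finite connected simple graphs, and let (a,b), (c,d) ∈ V(G) × V(H) with a ≠ c and b ≠ d. Then for every edge e of the Cartesian product G □ H, the distance between (a,b) and (c,d) in (G □ H) − e equals the distance between (a,b) and (c,d) in G □ H; equivalently, there exist two edge-disjoint shortest paths from (a,b) to (c,d) in G □ H. -/
open SimpleGraph

infixl:70 " ⊠ " => strongProd

/-- Lower bound: any walk in `G □ H` is at least as long as the sum of factor distances. -/
lemma boxProd_walk_length_ge {V W : Type*} {G : SimpleGraph V} {H : SimpleGraph W}
    (hG : G.Connected) (hH : H.Connected) :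
    ∀ {x y : V × W} (w : (G □ H).Walk x y),
      G.dist x.1 y.1 + H.dist x.2 y.2 ≤ w.length := by
  intro x y w
  induction w with
  | nil => simp
  | @cons u v y h p ih =>
    rw [SimpleGraph.boxProd_adj] at h
    rcases h with ⟨ha, hb⟩ | ⟨hb, ha⟩
    · have h1 : G.dist u.1 y.1 ≤ G.dist u.1 v.1 + G.dist v.1 y.1 := hG.dist_triangle
      have h2 : G.dist u.1 v.1 ≤ 1 := by
        calc G.dist u.1 v.1 ≤ (SimpleGraph.Walk.cons ha SimpleGraph.Walk.nil).length :=
              SimpleGraph.dist_le _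
          _ = 1 := by simp
      have h3 : u.2 = v.2 := hb
      simp only [SimpleGraph.Walk.length_cons]
      rw [h3]
      omega
    · have h1 : H.dist u.2 y.2 ≤ H.dist u.2 v.2 + H.dist v.2 y.2 := hH.dist_triangle
      have h2 : H.dist u.2 v.2 ≤ 1 := by
        calc H.dist u.2 v.2 ≤ (SimpleGraph.Walk.cons hb SimpleGraph.Walk.nil).length :=
              SimpleGraph.dist_le _
          _ = 1 := by simp
      have h3 : u.1 = v.1 := ha
      simp only [SimpleGraph.Walk.length_cons]
      rw [h3]
      omega

/-- Edges of a left-lifted walk have constant second coordinate. -/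
lemma mem_boxProdLeft_edges {V W : Type*} {G : SimpleGraph V} (H : SimpleGraph W)
    {b : W} {a₁ a₂ : V} (r : G.Walk a₁ a₂) {e : Sym2 (V × W)}
    (he : e ∈ (r.boxProdLeft H b).edges) : ∀ z ∈ e, z.2 = b := by
  have he : e ∈ (r.map (G.boxProdLeft H b).toHom).edges := he
  rw [SimpleGraph.Walk.edges_map, List.mem_map] at he
  obtain ⟨e', -, rfl⟩ := he
  induction e' using Sym2.ind with
  | _ x y =>
    intro z hz
    simp only [Sym2.map_pair_eq, Sym2.mem_iff] at hz
    rcases hz with rfl | rfl <;> rfl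

/-- Edges of a right-lifted walk have constant first coordinate. -/
lemma mem_boxProdRight_edges {V W : Type*} (G : SimpleGraph V) {H : SimpleGraph W}
    {a : V} {b₁ b₂ : W} (r : H.Walk b₁ b₂) {e : Sym2 (V × W)}
    (he : e ∈ (r.boxProdRight G a).edges) : ∀ z ∈ e, z.1 = a := by
  have he : e ∈ (r.map (G.boxProdRight H a).toHom).edges := he
  rw [SimpleGraph.Walk.edges_map, List.mem_map] at he
  obtain ⟨e', -, rfl⟩ := he
  induction e' using Sym2.ind with
  | _ x y =>
    intro z hz
    simp only [Sym2.map_pair_eq, Sym2.mem_iff] at hz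
    rcases hz with rfl | rfl <;> rfl

theorem boxProd_dist_deleteEdges_eq {V W : Type*} [Fintype V] [Fintype W]
    (G : SimpleGraph V) (H : SimpleGraph W)
    (hG : G.Connected) (hH : H.Connected)
    (a c : V) (b d : W) (hac : a ≠ c) (hbd : b ≠ d) :
    ∀ e ∈ (G □ H).edgeSet,
      ((G □ H).deleteEdges {e}).dist (a, b) (c, d) = (G □ H).dist (a, b) (c, d) := by
  intro e he
  obtain ⟨p, hp⟩ := hG.exists_walk_length_eq_dist a c
  obtain ⟨q, hq⟩ := hH.exists_walk_length_eq_dist b d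
  -- two shortest walks
  set w1 : (G □ H).Walk (a, b) (c, d) :=
    (p.boxProdLeft H b).append (q.boxProdRight G c) with hw1
  set w2 : (G □ H).Walk (a, b) (c, d) :=
    (q.boxProdRight G a).append (p.boxProdLeft H d) with hw2
  have hl1 : w1.length = G.dist a c + H.dist b d := by
    have e1 : (p.boxProdLeft H b).length = p.length := SimpleGraph.Walk.length_map _ p
    have e2 : (q.boxProdRight G c).length = q.length := SimpleGraph.Walk.length_map _ q
    simp [hw1, SimpleGraph.Walk.length_append,
      SimpleGraph.Walk.length_map, hp, hq, e1, e2]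
  have hl2 : w2.length = G.dist a c + H.dist b d := by
    have e1 : (p.boxProdLeft H d).length = p.length := SimpleGraph.Walk.length_map _ p
    have e2 : (q.boxProdRight G a).length = q.length := SimpleGraph.Walk.length_map _ q
    simp [hw2, SimpleGraph.Walk.length_append,
      SimpleGraph.Walk.length_map, hp, hq, Nat.add_comm, e1, e2]
  -- distance in the product is the sum
  have hdist : (G □ H).dist (a, b) (c, d) = G.dist a c + H.dist b d := by
    refine le_antisymm (hl1 ▸ SimpleGraph.dist_le w1) ?_
    obtain ⟨r, hr⟩ := (hG.boxProd hH).exists_walk_length_eq_dist (a, b) (c, d)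
    calc G.dist a c + H.dist b d ≤ r.length := boxProd_walk_length_ge hG hH r
      _ = _ := hr
  -- one of the two walks avoids e
  have hkey : e ∉ w1.edges ∨ e ∉ w2.edges := by
    by_contra hcon
    push_neg at hcon
    obtain ⟨h1, h2⟩ := hcon
    induction e using Sym2.ind with
    | _ u v =>
      have huv : u ≠ v := ((SimpleGraph.mem_edgeSet (G := G □ H)).mp he).ne
      have hu : u ∈ s(u, v) := Sym2.mem_mk_left u v
      have hv : v ∈ s(u, v) := Sym2.mem_mk_right u v
      rw [hw1, SimpleGraph.Walk.edges_append, List.mem_append] at h1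
      rw [hw2, SimpleGraph.Walk.edges_append, List.mem_append] at h2
      rcases h1 with h1 | h1 <;> rcases h2 with h2 | h2
      · -- snd = b everywhere and fst = a everywhere ⇒ u = v
        exact huv (Prod.ext
          ((mem_boxProdRight_edges G q h2 u hu).trans
            (mem_boxProdRight_edges G q h2 v hv).symm)
          ((mem_boxProdLeft_edges H p h1 u hu).trans
            (mem_boxProdLeft_edges H p h1 v hv).symm))
      · -- snd = b and snd = d ⇒ b = d
        exact hbd ((mem_boxProdLeft_edges H p h1 u hu).symm.trans
          (mem_boxProdLeft_edges H p h2 u hu))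
      · -- fst = c and fst = a ⇒ a = c
        exact hac ((mem_boxProdRight_edges G q h2 u hu).symm.trans
          (mem_boxProdRight_edges G q h1 u hu))
      · -- fst = c and snd = d ⇒ u = v
        exact huv (Prod.ext
          ((mem_boxProdRight_edges G q h1 u hu).trans
            (mem_boxProdRight_edges G q h1 v hv).symm)
          ((mem_boxProdLeft_edges H p h2 u hu).trans
            (mem_boxProdLeft_edges H p h2 v hv).symm))
  -- pick the avoiding walk, transfer to the deleted graph
  obtain ⟨w, hwlen, hwe⟩ : ∃ w : (G □ H).Walk (a, b) (c, d),
      w.length = G.dist a c + H.dist b d ∧ e ∉ w.edges := by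
    rcases hkey with h | h
    · exact ⟨w1, hl1, h⟩
    · exact ⟨w2, hl2, h⟩
  have hle : ((G □ H).deleteEdges {e}).dist (a, b) (c, d) ≤ G.dist a c + H.dist b d := by
    calc ((G □ H).deleteEdges {e}).dist (a, b) (c, d) ≤ (w.toDeleteEdge e hwe).length :=
          SimpleGraph.dist_le _
      _ = w.length := SimpleGraph.Walk.length_transfer _ _
      _ = _ := hwlen
  have hge : (G □ H).dist (a, b) (c, d) ≤ ((G □ H).deleteEdges {e}).dist (a, b) (c, d) := by
    have hreach : ((G □ H).deleteEdges {e}).Reachable (a, b) (c, d) := ⟨w.toDeleteEdge e hwe⟩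
    obtain ⟨r, hr⟩ := hreach.exists_walk_length_eq_dist
    calc (G □ H).dist (a, b) (c, d)
        ≤ (r.map (SimpleGraph.Hom.ofLE ((G □ H).deleteEdges_le {e}))).length :=
          SimpleGraph.dist_le _
      _ = r.length := by simp
      _ = _ := hr
  omega
end

section
/- For every integer m ≥ 5, the discrete torus C_m □ C_m (the Cartesian product of the cycle on m vertices with itself) satisfies meg(C_m □ C_m) = 3m. -/
open SimpleGraph

infixl:70 " ⊠ " => strongProd

open Fin.CommRing Fin.NatCast

namespace MegTorus

set_option linter.unusedSectionVars false

variable {m : ℕ} [NeZero m]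

/-- circular distance on `Fin m` -/
def cd (a b : Fin m) : ℕ := min (b - a).val (a - b).val

lemma add_val_cases (a d : Fin m) :
    (a + d).val = a.val + d.val ∨ (a + d).val + m = a.val + d.val := by
  have h := Fin.val_add a d
  have h1 : a.val < m := a.isLt
  have h2 : d.val < m := d.isLt
  rcases Nat.lt_or_ge (a.val + d.val) m with h3 | h3
  · left; rw [h, Nat.mod_eq_of_lt h3]
  · right
    rw [h, Nat.mod_eq_sub_mod h3, Nat.mod_eq_of_lt (by omega)]
    omega

/-- `(b - a).val + a.val` is `b.val` or `b.val + m`. -/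
lemma sub_val_spec (a b : Fin m) :
    (b - a).val + a.val = b.val ∨ (b - a).val + a.val = b.val + m := by
  have h : a + (b - a) = b := by ring
  rcases add_val_cases a (b - a) with h1 | h1 <;> rw [h] at h1 <;> omega

lemma sub_val_lt (a b : Fin m) : (b - a).val < m := (b - a).isLt

lemma sub_val_add_sub_val (a b : Fin m) :
    (b - a).val + (a - b).val = 0 ∨ (b - a).val + (a - b).val = m := by
  rcases sub_val_spec a b with h1 | h1 <;> rcases sub_val_spec b a with h2 | h2 <;> omega

lemma cd_triangle (a b c : Fin m) : cd a c ≤ cd a b + cd b c := by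
  have h : (b - a) + (c - b) = c - a := by ring
  have h1 := add_val_cases (b - a) (c - b)
  rw [h] at h1
  have h2 := sub_val_add_sub_val a b
  have h3 := sub_val_add_sub_val b c
  have h4 := sub_val_add_sub_val a c
  have l1 := sub_val_lt a b; have l2 := sub_val_lt b a
  have l3 := sub_val_lt b c; have l4 := sub_val_lt c b
  have l5 := sub_val_lt a c; have l6 := sub_val_lt c a
  unfold cd
  omega

lemma cd_self (a : Fin m) : cd a a = 0 := by simp [cd]

lemma cd_adj (hm : 3 ≤ m) {a b : Fin m} (h : (cycleGraph m).Adj a b) :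
    cd a b = 1 := by
  rw [cycleGraph_adj'] at h
  have h2 := sub_val_add_sub_val a b
  have l1 := sub_val_lt a b; have l2 := sub_val_lt b a
  unfold cd
  omega

/-- `Adj a (a+1)` in the cycle graph -/
lemma adj_up (hm : 2 ≤ m) (a : Fin m) : (cycleGraph m).Adj a (a + 1) := by
  rw [cycleGraph_adj']
  right
  have h : a + 1 - a = 1 := by ring
  rw [h, Fin.val_one']
  exact Nat.mod_eq_of_lt hm

/-- upward walk of length `k` from `a` to `a + k`, with edge control -/
lemma exists_walkUp (hm : 2 ≤ m) (k : ℕ) : ∀ a : Fin m,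
    ∃ W : (cycleGraph m).Walk a (a + (k : Fin m)), W.length = k ∧
      ∀ f ∈ W.edges, ∃ i : ℕ, i < k ∧ f = s(a + (i : Fin m), a + (i : Fin m) + 1) := by
  induction k with
  | zero =>
    intro a
    refine ⟨Walk.nil.copy rfl (by push_cast; ring), by simp, by simp⟩
  | succ k ih =>
    intro a
    obtain ⟨W, hlen, hedges⟩ := ih (a + 1)
    refine ⟨(Walk.cons (adj_up hm a) W).copy rfl (by push_cast; ring), by simp [hlen], ?_⟩
    intro f hf
    rw [Walk.edges_copy, Walk.edges_cons] at hf
    rw [List.mem_cons] at hf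
    rcases hf with hf | hf
    · refine ⟨0, by omega, ?_⟩
      rw [hf]; push_cast; ring_nf
    · obtain ⟨i, hi, hfi⟩ := hedges f hf
      refine ⟨i + 1, by omega, ?_⟩
      rw [hfi]; push_cast; ring_nf

end MegTorus

namespace MegTorus
set_option linter.unusedSectionVars false

variable {m : ℕ} [NeZero m]

lemma cd_comm (a b : Fin m) : cd a b = cd b a := by unfold cd; omega

lemma cd_add_cast (a : Fin m) (k : ℕ) (hk : k < m) : cd a (a + (k : Fin m)) = min k (m - k) := by
  have h1 : (a + (k : Fin m)) - a = (k : Fin m) := by ring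
  have h2 : ((k : Fin m)).val = k := by
    rw [Fin.val_natCast]; exact Nat.mod_eq_of_lt hk
  have h3 := sub_val_add_sub_val a (a + (k : Fin m))
  rw [h1, h2] at h3
  have l4 := sub_val_lt (a + (k : Fin m)) a
  unfold cd
  rw [h1, h2]
  omega

/-- the torus graph -/
abbrev TG (m : ℕ) : SimpleGraph (Fin m × Fin m) := cycleGraph m □ cycleGraph m

/-- torus distance formula candidate -/
def D (x y : Fin m × Fin m) : ℕ := cd x.1 y.1 + cd x.2 y.2

lemma D_step (hm : 3 ≤ m) {x z y : Fin m × Fin m} (h : (TG m).Adj x z) :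
    D x y ≤ 1 + D z y := by
  rcases boxProd_adj.mp h with ⟨h1, h2⟩ | ⟨h1, h2⟩
  · have e1 : cd x.1 y.1 ≤ cd x.1 z.1 + cd z.1 y.1 := cd_triangle _ _ _
    have e2 : cd x.1 z.1 = 1 := cd_adj hm h1
    have e3 : cd x.2 y.2 = cd z.2 y.2 := by rw [h2]
    unfold D; omega
  · have e1 : cd x.2 y.2 ≤ cd x.2 z.2 + cd z.2 y.2 := cd_triangle _ _ _
    have e2 : cd x.2 z.2 = 1 := cd_adj hm h1
    have e3 : cd x.1 y.1 = cd z.1 y.1 := by rw [h2]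
    unfold D; omega

lemma D_le_length (hm : 3 ≤ m) {x y : Fin m × Fin m} (W : (TG m).Walk x y) :
    D x y ≤ W.length := by
  induction W with
  | nil => simp [D, cd_self]
  | @cons u v w h p ih =>
    have hs : D u w ≤ 1 + D v w := D_step hm h
    rw [Walk.length_cons]
    omega

/-- horizontal walk in the torus, going "up" in the second coordinate -/
lemma exists_rowWalkUp (hm : 2 ≤ m) (r a : Fin m) (k : ℕ) :
    ∃ W : (TG m).Walk (r, a) (r, a + (k : Fin m)), W.length = k ∧
      ∀ f ∈ W.edges, ∃ i : ℕ, i < k ∧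
        f = s(((r, a + (i : Fin m)) : Fin m × Fin m), (r, a + (i : Fin m) + 1)) := by
  obtain ⟨W0, hlen, hedges⟩ := exists_walkUp hm k a
  refine ⟨Walk.boxProdRight _ r W0, ?_, ?_⟩
  · exact (Walk.length_map _ _).trans hlen
  · intro f hf
    replace hf := List.mem_map.mp (Eq.subst (motive := fun l => _ ∈ l) (Walk.edges_map ((cycleGraph m).boxProdRight (cycleGraph m) r).toHom W0) hf)
    obtain ⟨f0, hf0, rfl⟩ := hf
    obtain ⟨i, hi, rfl⟩ := hedges f0 hf0
    exact ⟨i, hi, by rfl⟩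

/-- vertical walk in the torus, going "up" in the first coordinate -/
lemma exists_colWalkUp (hm : 2 ≤ m) (r a : Fin m) (k : ℕ) :
    ∃ W : (TG m).Walk (a, r) (a + (k : Fin m), r), W.length = k ∧
      ∀ f ∈ W.edges, ∃ i : ℕ, i < k ∧
        f = s(((a + (i : Fin m), r) : Fin m × Fin m), (a + (i : Fin m) + 1, r)) := by
  obtain ⟨W0, hlen, hedges⟩ := exists_walkUp hm k a
  refine ⟨Walk.boxProdLeft _ r W0, ?_, ?_⟩
  · exact (Walk.length_map _ _).trans hlen
  · intro f hf
    replace hf := List.mem_map.mp (Eq.subst (motive := fun l => _ ∈ l) (Walk.edges_map ((cycleGraph m).boxProdLeft (cycleGraph m) r).toHom W0) hf)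
    obtain ⟨f0, hf0, rfl⟩ := hf
    obtain ⟨i, hi, rfl⟩ := hedges f0 hf0
    exact ⟨i, hi, by rfl⟩

end MegTorus

namespace MegTorus
set_option linter.unusedSectionVars false

variable {m : ℕ} [NeZero m]

lemma cast_val {k : ℕ} (hk : k < m) : ((k : Fin m)).val = k := by
  rw [Fin.val_natCast]; exact Nat.mod_eq_of_lt hk

lemma straight_unique (hm : 5 ≤ m) :
    ∀ g : ℕ, 2 * g < m → ∀ (r a : Fin m)
      (W : (TG m).Walk (r, a) (r, a + (g : Fin m))), W.length ≤ g →
      ∀ i : ℕ, i < g →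
        s(((r, a + (i : Fin m)) : Fin m × Fin m), (r, a + (i : Fin m) + 1)) ∈ W.edges := by
  intro g
  induction g with
  | zero => intro _ _ _ _ _ i hi; omega
  | succ g ih =>
    intro h2g r a W hlen i hi
    have hm3 : 3 ≤ m := by omega
    have hne : ((r, a) : Fin m × Fin m) ≠ (r, a + ((g+1 : ℕ) : Fin m)) := by
      intro hcontra
      have h1 : a = a + ((g+1 : ℕ) : Fin m) := congrArg Prod.snd hcontra
      have h2 : a + ((g+1 : ℕ) : Fin m) - a = 0 := by rw [← h1]; ring
      have h3 : ((g+1 : ℕ) : Fin m) = 0 := by rw [← h2]; ring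
      have h4 := congrArg Fin.val h3
      rw [cast_val (by omega)] at h4
      simp at h4
    obtain ⟨z, hadj, W', rfl⟩ := Walk.exists_eq_cons_of_ne hne W
    rw [Walk.length_cons] at hlen
    have hD : D z (r, a + ((g+1 : ℕ) : Fin m)) ≤ g := le_trans (D_le_length hm3 W') (by omega)
    rcases boxProd_adj.mp hadj with ⟨h1, h2⟩ | ⟨h1, h2⟩
    · -- first coordinate moved: contradiction
      exfalso
      have e1 : cd z.1 r = 1 := by rw [cd_comm]; exact cd_adj hm3 h1
      have e2 : cd z.2 (a + ((g+1 : ℕ) : Fin m)) = min (g+1) (m - (g+1)) := by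
        rw [← h2]; exact cd_add_cast a (g+1) (by omega)
      unfold D at hD
      rw [e1, e2] at hD
      omega
    · -- second coordinate moved
      rcases cycleGraph_adj'.mp h1 with hdn | hup
      · -- moved down: contradiction
        exfalso
        have hz2 : z.2 = a - 1 := by
          have : a - z.2 = 1 := by
            apply Fin.ext
            rw [hdn, Fin.val_one']
            exact (Nat.mod_eq_of_lt (by omega)).symm
          have h5 : z.2 = a - (a - z.2) := by ring
          rw [this] at h5; exact h5
        have e2 : cd z.2 (a + ((g+1 : ℕ) : Fin m)) = min (g+2) (m - (g+2)) := by
          have : a + ((g+1 : ℕ) : Fin m) = (a - 1) + ((g+2 : ℕ) : Fin m) := by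
            push_cast; ring
          rw [hz2, this]
          exact cd_add_cast (a-1) (g+2) (by omega)
        have e1 : cd z.1 r = 0 := by rw [← h2, cd_self]
        unfold D at hD
        rw [e1, e2] at hD
        omega
      · -- moved up: z = (r, a+1)
        have hz2 : z.2 = a + 1 := by
          have h5 : z.2 - a = 1 := by
            apply Fin.ext
            rw [hup, Fin.val_one']
            exact (Nat.mod_eq_of_lt (by omega)).symm
          have h6 : z.2 = a + (z.2 - a) := by ring
          rw [h5] at h6; exact h6
        have hz : z = (r, a + 1) := by
          apply Prod.ext
          · exact h2.symm
          · exact hz2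
        subst hz
        rw [Walk.edges_cons]
        rcases Nat.eq_zero_or_pos i with hi0 | hipos
        · subst hi0
          simp only [Nat.cast_zero, add_zero]
          exact List.mem_cons_self
        · obtain ⟨j, rfl⟩ : ∃ j, i = j + 1 := ⟨i - 1, by omega⟩
          have heq : ((r, a + ((g+1 : ℕ) : Fin m)) : Fin m × Fin m)
              = (r, (a + 1) + ((g : ℕ) : Fin m)) := by
            have : a + ((g+1 : ℕ) : Fin m) = (a + 1) + ((g : ℕ) : Fin m) := by
              push_cast; ring
            rw [this]
          have hmem := ih (by omega) r (a + 1) (W'.copy rfl heq)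
            (by rw [Walk.length_copy]; omega) j (by omega)
          rw [Walk.edges_copy] at hmem
          have hcast : (a + 1) + ((j : ℕ) : Fin m) = a + (((j+1 : ℕ)) : Fin m) := by
            push_cast; ring
          rw [hcast] at hmem
          exact List.mem_cons_of_mem _ hmem

end MegTorus

namespace MegTorus
set_option linter.unusedSectionVars false

variable {m : ℕ} [NeZero m]

lemma straight_unique_col (hm : 5 ≤ m) :
    ∀ g : ℕ, 2 * g < m → ∀ (r a : Fin m)
      (W : (TG m).Walk (a, r) (a + (g : Fin m), r)), W.length ≤ g →
      ∀ i : ℕ, i < g →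
        s(((a + (i : Fin m), r) : Fin m × Fin m), (a + (i : Fin m) + 1, r)) ∈ W.edges := by
  intro g
  induction g with
  | zero => intro _ _ _ _ _ i hi; omega
  | succ g ih =>
    intro h2g r a W hlen i hi
    have hm3 : 3 ≤ m := by omega
    have hne : ((a, r) : Fin m × Fin m) ≠ (a + ((g+1 : ℕ) : Fin m), r) := by
      intro hcontra
      have h1 : a = a + ((g+1 : ℕ) : Fin m) := congrArg Prod.fst hcontra
      have h2 : a + ((g+1 : ℕ) : Fin m) - a = 0 := by rw [← h1]; ring
      have h3 : ((g+1 : ℕ) : Fin m) = 0 := by rw [← h2]; ring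
      have h4 := congrArg Fin.val h3
      rw [cast_val (by omega)] at h4
      simp at h4
    obtain ⟨z, hadj, W', rfl⟩ := Walk.exists_eq_cons_of_ne hne W
    rw [Walk.length_cons] at hlen
    have hD : D z (a + ((g+1 : ℕ) : Fin m), r) ≤ g := le_trans (D_le_length hm3 W') (by omega)
    rcases boxProd_adj.mp hadj with ⟨h1, h2⟩ | ⟨h1, h2⟩
    · -- first coordinate moved
      rcases cycleGraph_adj'.mp h1 with hdn | hup
      · exfalso
        have hz1 : z.1 = a - 1 := by
          have h5 : a - z.1 = 1 := by
            apply Fin.ext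
            rw [hdn, Fin.val_one']
            exact (Nat.mod_eq_of_lt (by omega)).symm
          have h6 : z.1 = a - (a - z.1) := by ring
          rw [h5] at h6; exact h6
        have e2 : cd z.1 (a + ((g+1 : ℕ) : Fin m)) = min (g+2) (m - (g+2)) := by
          have heq : a + ((g+1 : ℕ) : Fin m) = (a - 1) + ((g+2 : ℕ) : Fin m) := by
            push_cast; ring
          rw [hz1, heq]
          exact cd_add_cast (a-1) (g+2) (by omega)
        have e1 : cd z.2 r = 0 := by rw [← h2, cd_self]
        unfold D at hD
        rw [e1, e2] at hD
        omega
      · have hz1 : z.1 = a + 1 := by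
          have h5 : z.1 - a = 1 := by
            apply Fin.ext
            rw [hup, Fin.val_one']
            exact (Nat.mod_eq_of_lt (by omega)).symm
          have h6 : z.1 = a + (z.1 - a) := by ring
          rw [h5] at h6; exact h6
        have hz : z = (a + 1, r) := by
          apply Prod.ext
          · exact hz1
          · exact h2.symm
        subst hz
        rw [Walk.edges_cons]
        rcases Nat.eq_zero_or_pos i with hi0 | hipos
        · subst hi0
          simp only [Nat.cast_zero, add_zero]
          exact List.mem_cons_self
        · obtain ⟨j, rfl⟩ : ∃ j, i = j + 1 := ⟨i - 1, by omega⟩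
          have heq : ((a + ((g+1 : ℕ) : Fin m), r) : Fin m × Fin m)
              = ((a + 1) + ((g : ℕ) : Fin m), r) := by
            have : a + ((g+1 : ℕ) : Fin m) = (a + 1) + ((g : ℕ) : Fin m) := by
              push_cast; ring
            rw [this]
          have hmem := ih (by omega) r (a + 1) (W'.copy rfl heq)
            (by rw [Walk.length_copy]; omega) j (by omega)
          rw [Walk.edges_copy] at hmem
          have hcast : (a + 1) + ((j : ℕ) : Fin m) = a + (((j+1 : ℕ)) : Fin m) := by
            push_cast; ring
          rw [hcast] at hmem
          exact List.mem_cons_of_mem _ hmem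
    · -- second coordinate moved: contradiction
      exfalso
      have e1 : cd z.2 r = 1 := by rw [cd_comm]; exact cd_adj hm3 h1
      have e2 : cd z.1 (a + ((g+1 : ℕ) : Fin m)) = min (g+1) (m - (g+1)) := by
        rw [← h2]; exact cd_add_cast a (g+1) (by omega)
      unfold D at hD
      rw [e1, e2] at hD
      omega

end MegTorus

namespace MegTorus
set_option linter.unusedSectionVars false

variable {m : ℕ} [NeZero m]

lemma exists_cycle_geo (hm : 2 ≤ m) (a b : Fin m) :
    ∃ W : (cycleGraph m).Walk a b, W.length = cd a b := by
  rcases le_total (b - a).val (a - b).val with h | h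
  · obtain ⟨W, hlen, _⟩ := exists_walkUp hm (b - a).val a
    have he : a + (((b - a).val : ℕ) : Fin m) = b := by
      rw [Fin.cast_val_eq_self]; ring
    refine ⟨W.copy rfl he, ?_⟩
    rw [Walk.length_copy, hlen]
    unfold cd; omega
  · obtain ⟨W, hlen, _⟩ := exists_walkUp hm (a - b).val b
    have he : b + (((a - b).val : ℕ) : Fin m) = a := by
      rw [Fin.cast_val_eq_self]; ring
    refine ⟨(W.copy rfl he).reverse, ?_⟩
    rw [Walk.length_reverse, Walk.length_copy, hlen]
    unfold cd; omega

lemma exists_D_walk (hm : 2 ≤ m) (x y : Fin m × Fin m) :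
    ∃ W : (TG m).Walk x y, W.length = D x y := by
  obtain ⟨V, hV⟩ := exists_cycle_geo hm x.1 y.1
  obtain ⟨Hw, hH⟩ := exists_cycle_geo hm x.2 y.2
  refine ⟨(Walk.boxProdLeft _ x.2 V).append (Walk.boxProdRight _ y.1 Hw), ?_⟩
  rw [Walk.length_append]
  exact congrArg₂ (· + ·) ((Walk.length_map _ _).trans hV) ((Walk.length_map _ _).trans hH)

lemma dist_eq_D (hm : 3 ≤ m) (x y : Fin m × Fin m) :
    (TG m).dist x y = D x y := by
  obtain ⟨W, hW⟩ := exists_D_walk (by omega) x y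
  refine le_antisymm (hW ▸ dist_le W) ?_
  obtain ⟨W', hW'⟩ := Reachable.exists_walk_length_eq_dist ⟨W⟩
  rw [← hW']
  exact D_le_length hm W'

lemma monitors_row (hm : 5 ≤ m) (r a : Fin m) {g k : ℕ} (h2 : 2 * g < m) (hk : k < g) :
    ¬ ((TG m).deleteEdges
        {s(((r, a + (k : Fin m)) : Fin m × Fin m), (r, a + (k : Fin m) + 1))}).Reachable
        (r, a) (r, a + (g : Fin m)) ∨
    ((TG m).deleteEdges
        {s(((r, a + (k : Fin m)) : Fin m × Fin m), (r, a + (k : Fin m) + 1))}).dist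
        (r, a) (r, a + (g : Fin m)) ≠ (TG m).dist (r, a) (r, a + (g : Fin m)) := by
  set e : Sym2 (Fin m × Fin m) :=
    s(((r, a + (k : Fin m)) : Fin m × Fin m), (r, a + (k : Fin m) + 1)) with he
  by_cases hreach : ((TG m).deleteEdges {e}).Reachable (r, a) (r, a + (g : Fin m))
  · right
    intro hdist
    have hdg : (TG m).dist (r, a) (r, a + (g : Fin m)) = g := by
      rw [dist_eq_D (by omega)]
      unfold D
      simp only
      rw [cd_self, cd_add_cast a g (by omega)]
      omega
    obtain ⟨W0, hW0⟩ := Reachable.exists_walk_length_eq_dist hreach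
    have hsub : ∀ f ∈ W0.edges, f ∈ (TG m).edgeSet := by
      intro f hf
      have := W0.edges_subset_edgeSet hf
      rw [edgeSet_deleteEdges] at this
      exact this.1
    have hnotin : e ∉ W0.edges := by
      intro hmem
      have := W0.edges_subset_edgeSet hmem
      rw [edgeSet_deleteEdges] at this
      exact this.2 rfl
    set W1 := W0.transfer (TG m) hsub with hW1
    have hlen1 : W1.length = g := by
      rw [hW1, Walk.length_transfer, hW0, hdist, hdg]
    have hmem := straight_unique hm g h2 r a W1 (le_of_eq hlen1) k hk
    rw [hW1, Walk.edges_transfer] at hmem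
    exact hnotin hmem
  · left; exact hreach

lemma monitors_col (hm : 5 ≤ m) (r a : Fin m) {g k : ℕ} (h2 : 2 * g < m) (hk : k < g) :
    ¬ ((TG m).deleteEdges
        {s(((a + (k : Fin m), r) : Fin m × Fin m), (a + (k : Fin m) + 1, r))}).Reachable
        (a, r) (a + (g : Fin m), r) ∨
    ((TG m).deleteEdges
        {s(((a + (k : Fin m), r) : Fin m × Fin m), (a + (k : Fin m) + 1, r))}).dist
        (a, r) (a + (g : Fin m), r) ≠ (TG m).dist (a, r) (a + (g : Fin m), r) := by
  set e : Sym2 (Fin m × Fin m) :=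
    s(((a + (k : Fin m), r) : Fin m × Fin m), (a + (k : Fin m) + 1, r)) with he
  by_cases hreach : ((TG m).deleteEdges {e}).Reachable (a, r) (a + (g : Fin m), r)
  · right
    intro hdist
    have hdg : (TG m).dist (a, r) (a + (g : Fin m), r) = g := by
      rw [dist_eq_D (by omega)]
      unfold D
      simp only
      rw [cd_self, cd_add_cast a g (by omega)]
      omega
    obtain ⟨W0, hW0⟩ := Reachable.exists_walk_length_eq_dist hreach
    have hsub : ∀ f ∈ W0.edges, f ∈ (TG m).edgeSet := by
      intro f hf
      have := W0.edges_subset_edgeSet hf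
      rw [edgeSet_deleteEdges] at this
      exact this.1
    have hnotin : e ∉ W0.edges := by
      intro hmem
      have := W0.edges_subset_edgeSet hmem
      rw [edgeSet_deleteEdges] at this
      exact this.2 rfl
    set W1 := W0.transfer (TG m) hsub with hW1
    have hlen1 : W1.length = g := by
      rw [hW1, Walk.length_transfer, hW0, hdist, hdg]
    have hmem := straight_unique_col hm g h2 r a W1 (le_of_eq hlen1) k hk
    rw [hW1, Walk.edges_transfer] at hmem
    exact hnotin hmem
  · left; exact hreach

end MegTorus

namespace MegTorus
set_option linter.unusedSectionVars false

variable {m : ℕ} [NeZero m]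

lemma eq_add_one_of_sub_val (hm : 2 ≤ m) {a b : Fin m} (h : (b - a).val = 1) : b = a + 1 := by
  have h1 : b - a = 1 := by
    apply Fin.ext
    rw [h, Fin.val_one']
    exact (Nat.mod_eq_of_lt hm).symm
  have h2 : b = a + (b - a) := by ring
  rw [h1] at h2; exact h2

lemma edge_cases (hm : 5 ≤ m) {e : Sym2 (Fin m × Fin m)} (he : e ∈ (TG m).edgeSet) :
    (∃ r c : Fin m, e = s(((r, c) : Fin m × Fin m), (r, c + 1))) ∨
    (∃ q t : Fin m, e = s(((q, t) : Fin m × Fin m), (q + 1, t))) := by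
  induction e using Sym2.ind with
  | _ v w =>
    rw [mem_edgeSet] at he
    rcases boxProd_adj.mp he with ⟨h1, h2⟩ | ⟨h1, h2⟩
    · -- column type: Adj v.1 w.1, v.2 = w.2
      right
      rcases cycleGraph_adj'.mp h1 with hd | hd
      · -- (v.1 - w.1).val = 1, so v.1 = w.1 + 1
        refine ⟨w.1, w.2, ?_⟩
        rw [Sym2.eq_swap]
        have hv : v = (w.1 + 1, w.2) := by
          apply Prod.ext
          · exact eq_add_one_of_sub_val (by omega) hd
          · exact h2
        rw [← hv]
      · refine ⟨v.1, v.2, ?_⟩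
        have hw : w = (v.1 + 1, v.2) := by
          apply Prod.ext
          · exact eq_add_one_of_sub_val (by omega) hd
          · exact h2.symm
        rw [← hw]
    · -- row type: Adj v.2 w.2, v.1 = w.1
      left
      rcases cycleGraph_adj'.mp h1 with hd | hd
      · refine ⟨w.1, w.2, ?_⟩
        rw [Sym2.eq_swap]
        have hv : v = (w.1, w.2 + 1) := by
          apply Prod.ext
          · exact h2
          · exact eq_add_one_of_sub_val (by omega) hd
        rw [← hv]
      · refine ⟨v.1, v.2, ?_⟩
        have hw : w = (v.1, v.2 + 1) := by
          apply Prod.ext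
          · exact h2.symm
          · exact eq_add_one_of_sub_val (by omega) hd
        rw [← hw]

/-- the canonical MEG set: three shifted diagonals -/
def megSet (m : ℕ) [NeZero m] : Set (Fin m × Fin m) :=
  {v | v.2 = v.1 ∨ v.2 = v.1 + (((m+2)/3 : ℕ) : Fin m) ∨
    v.2 = v.1 + (((m+2)/3 : ℕ) : Fin m) + (((m+2)/3 : ℕ) : Fin m)}

lemma megSet_isMEG (hm : 5 ≤ m) : IsMEGSet (TG m) (megSet m) := by
  intro e he
  set P : ℕ := (m+2)/3 with hP
  have hP1 : 1 ≤ P := by omega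
  have hP2 : 2 * P < m := by omega
  have hPg : 1 ≤ m - 2 * P := by omega
  have hPg2 : 2 * (m - 2 * P) < m := by omega
  rcases edge_cases hm he with ⟨r, c, rfl⟩ | ⟨q, t, rfl⟩
  · -- row edge in row r
    set tv : ℕ := (c - r).val with htv
    have htvm : tv < m := (c - r).isLt
    have hc : c = r + (tv : Fin m) := by
      rw [htv, Fin.cast_val_eq_self]; ring
    rcases Nat.lt_or_ge tv P with h1 | h1
    · refine ⟨(r, r), Or.inl rfl, (r, r + (P : Fin m)), Or.inr (Or.inl rfl), ?_⟩
      have := monitors_row hm r r (g := P) (k := tv) (by omega) h1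
      rwa [hc]
    rcases Nat.lt_or_ge tv (2*P) with h2 | h2
    · refine ⟨(r, r + (P : Fin m)), Or.inr (Or.inl rfl),
        (r, r + (P : Fin m) + (P : Fin m)), Or.inr (Or.inr rfl), ?_⟩
      have := monitors_row hm r (r + (P : Fin m)) (g := P) (k := tv - P) (by omega) (by omega)
      have he1 : r + (P : Fin m) + ((tv - P : ℕ) : Fin m) = c := by
        rw [hc]
        push_cast [Nat.cast_sub h1]
        ring
      have he2 : r + (P : Fin m) + ((P : ℕ) : Fin m) = r + (P : Fin m) + (P : Fin m) := rfl
      rwa [he1] at this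
    · refine ⟨(r, r + (P : Fin m) + (P : Fin m)), Or.inr (Or.inr rfl),
        (r, r), Or.inl rfl, ?_⟩
      have := monitors_row hm r (r + (P : Fin m) + (P : Fin m))
        (g := m - 2*P) (k := tv - 2*P) (by omega) (by omega)
      have he1 : r + (P : Fin m) + (P : Fin m) + ((tv - 2*P : ℕ) : Fin m) = c := by
        rw [hc]
        push_cast [Nat.cast_sub h2]
        ring
      have he2 : r + (P : Fin m) + (P : Fin m) + ((m - 2*P : ℕ) : Fin m) = r := by
        push_cast [Nat.cast_sub (le_of_lt hP2)]
        rw [Fin.natCast_self]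
        ring
      rwa [he1, he2] at this
  · -- column edge in column t
    set PF : Fin m := ((P : ℕ) : Fin m) with hPF
    set uv : ℕ := (q - (t - PF - PF)).val with huv
    have huvm : uv < m := (q - (t - PF - PF)).isLt
    have hq : q = (t - PF - PF) + (uv : Fin m) := by
      rw [huv, Fin.cast_val_eq_self]; ring
    rcases Nat.lt_or_ge uv P with h1 | h1
    · refine ⟨(t - PF - PF, t), Or.inr (Or.inr (by simp only; ring)),
        (t - PF - PF + PF, t), Or.inr (Or.inl (by simp only; ring)), ?_⟩
      have := monitors_col hm t (t - PF - PF) (g := P) (k := uv) (by omega) h1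
      rwa [hq]
    rcases Nat.lt_or_ge uv (2*P) with h2 | h2
    · refine ⟨(t - PF, t), Or.inr (Or.inl (by simp only; ring)),
        (t - PF + PF, t), Or.inl (by simp only; ring), ?_⟩
      have := monitors_col hm t (t - PF) (g := P) (k := uv - P) (by omega) (by omega)
      have he1 : t - PF + ((uv - P : ℕ) : Fin m) = q := by
        rw [hq]
        push_cast [Nat.cast_sub h1]
        rw [hPF]; push_cast; ring
      rwa [he1] at this
    · refine ⟨(t, t), Or.inl rfl,
        (t + ((m - 2*P : ℕ) : Fin m), t), Or.inr (Or.inr ?_), ?_⟩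
      · simp only
        push_cast [Nat.cast_sub (le_of_lt hP2)]
        rw [Fin.natCast_self, ← hP]
        ring
      have := monitors_col hm t t (g := m - 2*P) (k := uv - 2*P) (by omega) (by omega)
      have he1 : t + ((uv - 2*P : ℕ) : Fin m) = q := by
        rw [hq]
        push_cast [Nat.cast_sub h2]
        rw [hPF]
        ring
      rwa [he1] at this

end MegTorus

namespace MegTorus
set_option linter.unusedSectionVars false

variable {m : ℕ} [NeZero m]

lemma megSet_ncard (hm : 5 ≤ m) : (megSet m).ncard = 3 * m := by
  have hP1 : 1 ≤ (m+2)/3 := by omega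
  have hP2 : 2 * ((m+2)/3) < m := by omega
  set F : Fin m × Fin 3 → Fin m × Fin m :=
    fun q => (q.1, q.1 + ((q.2.val * ((m+2)/3) : ℕ) : Fin m)) with hF
  have hinj : Function.Injective F := by
    rintro ⟨a, j⟩ ⟨a', j'⟩ h
    rw [hF, Prod.ext_iff] at h
    simp only at h
    obtain ⟨h1, h2⟩ := h
    subst h1
    have h3 : ((j.val * ((m+2)/3) : ℕ) : Fin m) = ((j'.val * ((m+2)/3) : ℕ) : Fin m) := by
      have := congrArg (fun z => z - a) h2
      simpa using this
    have h4 := congrArg Fin.val h3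
    have hb1 : j.val * ((m+2)/3) ≤ 2 * ((m+2)/3) :=
      Nat.mul_le_mul_right _ (by have := j.isLt; omega)
    have hb2 : j'.val * ((m+2)/3) ≤ 2 * ((m+2)/3) :=
      Nat.mul_le_mul_right _ (by have := j'.isLt; omega)
    rw [cast_val (by omega), cast_val (by omega)] at h4
    have h5 : j.val = j'.val := Nat.eq_of_mul_eq_mul_right (by omega) h4
    rw [Prod.mk.injEq]
    exact ⟨rfl, Fin.ext h5⟩
  have hrange : megSet m = Set.range F := by
    ext v
    constructor
    · intro hv
      rcases hv with h | h | h
      · refine ⟨(v.1, 0), ?_⟩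
        rw [hF]; simp only
        refine Prod.ext rfl ?_
        show v.1 + ((((0:Fin 3).val * ((m+2)/3) : ℕ)) : Fin m) = v.2
        rw [h]; norm_num
      · refine ⟨(v.1, 1), ?_⟩
        rw [hF]; simp only
        refine Prod.ext rfl ?_
        show v.1 + ((((1:Fin 3).val * ((m+2)/3) : ℕ)) : Fin m) = v.2
        rw [h]
        have h1 : (1:Fin 3).val = 1 := rfl
        rw [h1]; norm_num
      · refine ⟨(v.1, 2), ?_⟩
        rw [hF]; simp only
        refine Prod.ext rfl ?_
        show v.1 + ((((2:Fin 3).val * ((m+2)/3) : ℕ)) : Fin m) = v.2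
        rw [h]
        have h1 : (2:Fin 3).val = 2 := rfl
        rw [h1]; push_cast; ring
    · rintro ⟨⟨a, j⟩, rfl⟩
      rw [hF]; simp only
      fin_cases j
      · left; simp
      · right; left
        simp only
        norm_num
      · right; right
        simp only
        show a + (((2 * ((m+2)/3) : ℕ)) : Fin m) = a + _ + _
        push_cast; ring
  rw [hrange, ← Set.image_univ, Set.ncard_image_of_injective _ hinj, Set.ncard_univ]
  simp [Nat.card_eq_fintype_card]
  ring

end MegTorus

namespace MegTorus
set_option linter.unusedSectionVars false

variable {m : ℕ} [NeZero m]

lemma add_one_ne (hm : 2 ≤ m) (c : Fin m) : c + 1 ≠ c := by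
  intro h
  have h1 : (c + 1) - c = 0 := by rw [h]; ring
  have h2 : (c + 1) - c = 1 := by ring
  rw [h2] at h1
  have := congrArg Fin.val h1
  rw [Fin.val_one', Nat.mod_eq_of_lt hm] at this
  simp at this

lemma add_two_ne (hm : 3 ≤ m) (c : Fin m) : c + 1 + 1 ≠ c := by
  intro h
  have e : c + 1 + 1 - c = 1 + 1 := by ring
  rw [h, sub_self] at e
  have h2 := congrArg Fin.val e.symm
  rw [Fin.val_zero] at h2
  rcases add_val_cases (1 : Fin m) 1 with h3 | h3 <;>
    rw [Fin.val_one', Nat.mod_eq_of_lt (by omega : 1 < m)] at h3 <;>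
    omega

lemma up_avoid (hm : 5 ≤ m) (a c : Fin m) (k : ℕ) (hk : k < m) (hw : k ≤ (c - a).val) :
    ∃ W : (cycleGraph m).Walk a (a + (k : Fin m)), W.length = k ∧ s(c, c + 1) ∉ W.edges := by
  obtain ⟨W, hlen, hedges⟩ := exists_walkUp (by omega) k a
  refine ⟨W, hlen, fun hmem => ?_⟩
  obtain ⟨i, hi, heq⟩ := hedges _ hmem
  rw [Sym2.eq_iff] at heq
  rcases heq with ⟨h1, h2⟩ | ⟨h1, h2⟩
  · have hv : (c - a).val = i := by
      rw [h1]
      have h3 : a + (i : Fin m) - a = (i : Fin m) := by ring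
      rw [h3, cast_val (by omega)]
    omega
  · apply add_two_ne (by omega) c
    rw [← h2] at h1
    exact h1.symm

lemma geo_avoid (hm : 5 ≤ m) (a b c : Fin m)
    (h1 : ¬(2 * (b - a).val < m ∧ (c - a).val < (b - a).val))
    (h2 : ¬(2 * (a - b).val < m ∧ (c - b).val < (a - b).val)) :
    ∃ W : (cycleGraph m).Walk a b, W.length = cd a b ∧ s(c, c + 1) ∉ W.edges := by
  have F1 := sub_val_add_sub_val a b
  have F2 : (c - a).val = (b - a).val + (c - b).val ∨
      (c - a).val + m = (b - a).val + (c - b).val := by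
    have h : (b - a) + (c - b) = c - a := by ring
    rcases add_val_cases (b - a) (c - b) with h3 | h3 <;> rw [h] at h3 <;> omega
  have l1 := sub_val_lt a b; have l2 := sub_val_lt b a
  have l3 := sub_val_lt a c; have l4 := sub_val_lt b c
  have hea : a + (((b - a).val : ℕ) : Fin m) = b := by
    rw [Fin.cast_val_eq_self]; ring
  have heb : b + (((a - b).val : ℕ) : Fin m) = a := by
    rw [Fin.cast_val_eq_self]; ring
  by_cases hcase : (b - a).val ≤ (a - b).val
  · by_cases hw : (b - a).val ≤ (c - a).val
    · obtain ⟨W, hlen, hnot⟩ := up_avoid hm a c (b - a).val l1 hw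
      refine ⟨W.copy rfl hea, ?_, ?_⟩
      · rw [Walk.length_copy, hlen]; unfold cd; omega
      · rw [Walk.edges_copy]; exact hnot
    · -- (c-a).val < (b-a).val, so by h1, 2*(b-a).val ≥ m, hence (b-a).val = (a-b).val
      have hu : ¬ 2 * (b - a).val < m := fun hlt => h1 ⟨hlt, by omega⟩
      have huu : (b - a).val = (a - b).val := by omega
      have hw' : (a - b).val ≤ (c - b).val := by omega
      obtain ⟨W, hlen, hnot⟩ := up_avoid hm b c (a - b).val l2 hw'
      refine ⟨(W.copy rfl heb).reverse, ?_, ?_⟩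
      · rw [Walk.length_reverse, Walk.length_copy, hlen]; unfold cd; omega
      · rw [Walk.edges_reverse, List.mem_reverse, Walk.edges_copy]; exact hnot
  · by_cases hw : (a - b).val ≤ (c - b).val
    · obtain ⟨W, hlen, hnot⟩ := up_avoid hm b c (a - b).val l2 hw
      refine ⟨(W.copy rfl heb).reverse, ?_, ?_⟩
      · rw [Walk.length_reverse, Walk.length_copy, hlen]; unfold cd; omega
      · rw [Walk.edges_reverse, List.mem_reverse, Walk.edges_copy]; exact hnot
    · exfalso
      have hu : ¬ 2 * (a - b).val < m := fun hlt => h2 ⟨hlt, by omega⟩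
      omega

lemma exists_horiz_avoid (hm : 5 ≤ m) (r a b c : Fin m)
    (h1 : ¬(2 * (b - a).val < m ∧ (c - a).val < (b - a).val))
    (h2 : ¬(2 * (a - b).val < m ∧ (c - b).val < (a - b).val)) :
    ∃ W : (TG m).Walk (r, a) (r, b), W.length = cd a b ∧
      s(((r, c) : Fin m × Fin m), (r, c + 1)) ∉ W.edges := by
  obtain ⟨W0, hlen, hnot⟩ := geo_avoid hm a b c h1 h2
  refine ⟨Walk.boxProdRight _ r W0, ?_, ?_⟩
  · exact (Walk.length_map _ _).trans hlen
  · intro hmem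
    replace hmem := List.mem_map.mp (Eq.subst (motive := fun l => _ ∈ l) (Walk.edges_map ((cycleGraph m).boxProdRight (cycleGraph m) r).toHom W0) hmem)
    obtain ⟨f0, hf0, hfeq⟩ := hmem
    apply hnot
    have hinj : Function.Injective (fun u : Fin m => ((r, u) : Fin m × Fin m)) :=
      fun u v h => congrArg Prod.snd h
    have : Sym2.map (fun u : Fin m => ((r, u) : Fin m × Fin m)) s(c, c+1)
        = s(((r, c) : Fin m × Fin m), (r, c + 1)) := rfl
    rw [← this] at hfeq
    have hf : f0 = s(c, c+1) := Sym2.map.injective hinj (by exact hfeq)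
    rwa [← hf]

/-- horizontal geodesic walk in a given row, edges all in that row -/
lemma exists_horiz_walk (hm : 5 ≤ m) (s a b : Fin m) :
    ∃ W : (TG m).Walk (s, a) (s, b), W.length = cd a b ∧
      ∀ f ∈ W.edges, ∃ p q : Fin m, f = s(((s, p) : Fin m × Fin m), (s, q)) := by
  obtain ⟨W0, hlen⟩ := exists_cycle_geo (by omega) a b
  refine ⟨Walk.boxProdRight _ s W0, ?_, ?_⟩
  · exact (Walk.length_map _ _).trans hlen
  · intro f hf
    replace hf := List.mem_map.mp (Eq.subst (motive := fun l => _ ∈ l) (Walk.edges_map ((cycleGraph m).boxProdRight (cycleGraph m) s).toHom W0) hf)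
    obtain ⟨f0, hf0, rfl⟩ := hf
    induction f0 using Sym2.ind with
    | _ p q => exact ⟨p, q, rfl⟩

/-- vertical geodesic walk in a given column, edges all in that column -/
lemma exists_vert_walk (hm : 5 ≤ m) (t a b : Fin m) :
    ∃ W : (TG m).Walk (a, t) (b, t), W.length = cd a b ∧
      ∀ f ∈ W.edges, ∃ p q : Fin m, f = s(((p, t) : Fin m × Fin m), (q, t)) := by
  obtain ⟨W0, hlen⟩ := exists_cycle_geo (by omega) a b
  refine ⟨Walk.boxProdLeft _ t W0, ?_, ?_⟩
  · exact (Walk.length_map _ _).trans hlen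
  · intro f hf
    replace hf := List.mem_map.mp (Eq.subst (motive := fun l => _ ∈ l) (Walk.edges_map ((cycleGraph m).boxProdLeft (cycleGraph m) t).toHom W0) hf)
    obtain ⟨f0, hf0, rfl⟩ := hf
    induction f0 using Sym2.ind with
    | _ p q => exact ⟨p, q, rfl⟩

lemma vert_ne (hm : 5 ≤ m) (p q t r c : Fin m) :
    s(((p, t) : Fin m × Fin m), (q, t)) ≠ s(((r, c) : Fin m × Fin m), (r, c + 1)) := by
  intro hh
  rw [Sym2.eq_iff] at hh
  rcases hh with ⟨h1, h2⟩ | ⟨h1, h2⟩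
  · have e1 : t = c := congrArg Prod.snd h1
    have e2 : t = c + 1 := congrArg Prod.snd h2
    exact add_one_ne (by omega) c (e2 ▸ e1)
  · have e1 : t = c + 1 := congrArg Prod.snd h1
    have e2 : t = c := congrArg Prod.snd h2
    exact add_one_ne (by omega) c (e1 ▸ e2)

lemma horiz_ne (hm : 5 ≤ m) {s r : Fin m} (hs : s ≠ r) (p q c : Fin m) :
    s(((s, p) : Fin m × Fin m), (s, q)) ≠ s(((r, c) : Fin m × Fin m), (r, c + 1)) := by
  intro hh
  rw [Sym2.eq_iff] at hh
  rcases hh with ⟨h1, _⟩ | ⟨h1, _⟩ <;> exact hs (congrArg Prod.fst h1)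

end MegTorus

namespace MegTorus
set_option linter.unusedSectionVars false

variable {m : ℕ} [NeZero m]

/-- If the pair `(x, y)` is not a "row-r covering pair" for the edge at `(r,c)-(r,c+1)`,
then there is a geodesic from `x` to `y` avoiding that edge. -/
lemma torus_avoid (hm : 5 ≤ m) (r c : Fin m) (x y : Fin m × Fin m)
    (hcov : x.1 = r → y.1 = r →
      (¬(2 * (y.2 - x.2).val < m ∧ (c - x.2).val < (y.2 - x.2).val) ∧
       ¬(2 * (x.2 - y.2).val < m ∧ (c - y.2).val < (x.2 - y.2).val))) :
    ∃ W : (TG m).Walk x y, W.length = D x y ∧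
      s(((r, c) : Fin m × Fin m), (r, c + 1)) ∉ W.edges := by
  obtain ⟨x1, x2⟩ := x
  obtain ⟨y1, y2⟩ := y
  simp only at hcov ⊢
  by_cases hx : x1 = r
  · by_cases hy : y1 = r
    · -- both in row r
      obtain ⟨h1, h2⟩ := hcov hx hy
      obtain ⟨W, hlen, hnot⟩ := exists_horiz_avoid hm r x2 y2 c h1 h2
      have hxx : ((r, x2) : Fin m × Fin m) = (x1, x2) := by rw [hx]
      have hyy : ((r, y2) : Fin m × Fin m) = (y1, y2) := by rw [hy]
      refine ⟨W.copy hxx hyy, ?_, ?_⟩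
      · rw [Walk.length_copy, hlen]
        unfold D
        simp [hx, hy, cd_self]
      · rw [Walk.edges_copy]; exact hnot
    · -- y not in row r: vertical (col x2) then horizontal (row y1)
      obtain ⟨V, hVlen, hVed⟩ := exists_vert_walk hm x2 x1 y1
      obtain ⟨H, hHlen, hHed⟩ := exists_horiz_walk hm y1 x2 y2
      refine ⟨V.append H, ?_, ?_⟩
      · rw [Walk.length_append, hVlen, hHlen]
        unfold D
        simp only
      · intro hmem
        rw [Walk.edges_append, List.mem_append] at hmem
        rcases hmem with hmem | hmem
        · obtain ⟨p, q, hf⟩ := hVed _ hmem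
          exact vert_ne hm p q x2 r c (hf ▸ rfl)
        · obtain ⟨p, q, hf⟩ := hHed _ hmem
          exact horiz_ne hm hy p q c (hf ▸ rfl)
  · -- x not in row r: horizontal (row x1) then vertical (col y2)
    obtain ⟨H, hHlen, hHed⟩ := exists_horiz_walk hm x1 x2 y2
    obtain ⟨V, hVlen, hVed⟩ := exists_vert_walk hm y2 x1 y1
    refine ⟨H.append V, ?_, ?_⟩
    · rw [Walk.length_append, hVlen, hHlen]
      unfold D
      simp only
      omega
    · intro hmem
      rw [Walk.edges_append, List.mem_append] at hmem
      rcases hmem with hmem | hmem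
      · obtain ⟨p, q, hf⟩ := hHed _ hmem
        exact horiz_ne hm hx p q c (hf ▸ rfl)
      · obtain ⟨p, q, hf⟩ := hVed _ hmem
        exact vert_ne hm p q y2 r c (hf ▸ rfl)

/-- a pair admitting an avoiding geodesic does not monitor the edge -/
lemma not_monitor (hm : 5 ≤ m) {e : Sym2 (Fin m × Fin m)} (x y : Fin m × Fin m)
    (W : (TG m).Walk x y) (hlen : W.length = D x y) (hnot : e ∉ W.edges) :
    ((TG m).deleteEdges {e}).Reachable x y ∧
      ((TG m).deleteEdges {e}).dist x y = (TG m).dist x y := by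
  have hWe : ∀ f ∈ W.edges, f ∈ ((TG m).deleteEdges {e}).edgeSet := by
    intro f hf
    rw [edgeSet_deleteEdges]
    exact ⟨W.edges_subset_edgeSet hf, by simp; rintro rfl; exact hnot hf⟩
  set W' := W.transfer _ hWe with hW'
  have hlen' : W'.length = D x y := by rw [hW', Walk.length_transfer, hlen]
  constructor
  · exact ⟨W'⟩
  · refine le_antisymm ?_ ?_
    · rw [dist_eq_D (by omega), ← hlen']
      exact dist_le W'
    · obtain ⟨W0, hW0⟩ := Reachable.exists_walk_length_eq_dist (⟨W'⟩ :
        ((TG m).deleteEdges {e}).Reachable x y)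
      have hsub : ∀ f ∈ W0.edges, f ∈ (TG m).edgeSet := by
        intro f hf
        have := W0.edges_subset_edgeSet hf
        rw [edgeSet_deleteEdges] at this
        exact this.1
      calc (TG m).dist x y ≤ (W0.transfer _ hsub).length := dist_le _
    _ = W0.length := Walk.length_transfer _ _
    _ = ((TG m).deleteEdges {e}).dist x y := hW0

end MegTorus

namespace MegTorus
set_option linter.unusedSectionVars false

variable {m : ℕ} [NeZero m]

lemma finset_card_le_two {α : Type*} [DecidableEq α] (F : Finset α) (z : α) (h : F.card ≤ 2) :
    ∃ a b, ∀ x ∈ F, x = a ∨ x = b := by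
  rcases F.eq_empty_or_nonempty with hF | ⟨a, ha⟩
  · exact ⟨z, z, by simp [hF]⟩
  · refine ⟨a, ?_⟩
    rcases (F.erase a).eq_empty_or_nonempty with hE | ⟨b, hb⟩
    · refine ⟨a, fun x hx => Or.inl ?_⟩
      by_contra hxa
      have : x ∈ F.erase a := Finset.mem_erase.mpr ⟨hxa, hx⟩
      rw [hE] at this
      exact absurd this (Finset.notMem_empty x)
    · refine ⟨b, fun x hx => ?_⟩
      by_cases hxa : x = a
      · exact Or.inl hxa
      · have hle : (F.erase a).card ≤ 1 := by
          rw [Finset.card_erase_of_mem ha]; omega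
        exact Or.inr (Finset.card_le_one.mp hle x
          (Finset.mem_erase.mpr ⟨hxa, hx⟩) b hb)

lemma row_three (hm : 5 ≤ m) {S : Set (Fin m × Fin m)} [Fintype S]
    (hS : IsMEGSet (TG m) S) (r : Fin m) [DecidablePred (· ∈ S)] :
    3 ≤ (S.toFinset.filter (fun v => v.1 = r)).card := by
  by_contra hlt
  push_neg at hlt
  obtain ⟨a, b, hab⟩ := finset_card_le_two (S.toFinset.filter (fun v => v.1 = r))
    ((r, 0) : Fin m × Fin m) (by omega)
  set c : Fin m := a.2 + ((m / 2 : ℕ) : Fin m) with hc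
  have hc1 : (c - a.2).val = m / 2 := by
    have h1 : c - a.2 = ((m / 2 : ℕ) : Fin m) := by rw [hc]; ring
    rw [h1, cast_val (by omega)]
  -- the key: no pair with both coordinates in {a.2, b.2} covers the edge at (r,c)
  have hkey : ∀ α β : Fin m, (α = a.2 ∨ α = b.2) → (β = a.2 ∨ β = b.2) →
      ¬(2 * (β - α).val < m ∧ (c - α).val < (β - α).val) := by
    intro α β hα hβ
    rintro ⟨h2u, hlt'⟩
    rcases hα with rfl | rfl
    · rw [hc1] at hlt'
      omega
    · rcases hβ with rfl | rfl
      · -- α = b.2, β = a.2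
        have hgrp : (c - a.2) + (a.2 - b.2) = c - b.2 := by ring
        have F2 := add_val_cases (c - a.2) (a.2 - b.2)
        rw [hgrp, hc1] at F2
        have l := (c - b.2).isLt
        omega
      · have h0 : ((b.2 : Fin m) - b.2).val = 0 := by simp
        omega
  have he : s(((r, c) : Fin m × Fin m), (r, c + 1)) ∈ (TG m).edgeSet := by
    rw [mem_edgeSet]
    exact boxProd_adj.mpr (Or.inr ⟨adj_up (by omega) c, rfl⟩)
  obtain ⟨x, hxS, y, hyS, hmon⟩ := hS _ he
  have hmem : ∀ z : Fin m × Fin m, z ∈ S → z.1 = r → (z.2 = a.2 ∨ z.2 = b.2) := by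
    intro z hz hz1
    have hzf : z ∈ Finset.filter (fun v => v.1 = r) S.toFinset :=
      Finset.mem_filter.mpr ⟨Set.mem_toFinset.mpr hz, hz1⟩
    rcases hab z hzf with rfl | rfl
    · exact Or.inl rfl
    · exact Or.inr rfl
  obtain ⟨W, hWlen, hWnot⟩ := torus_avoid hm r c x y
    (fun hx1 hy1 => ⟨hkey x.2 y.2 (hmem x hxS hx1) (hmem y hyS hy1),
                     hkey y.2 x.2 (hmem y hyS hy1) (hmem x hxS hx1)⟩)
  obtain ⟨hreach, hdist⟩ := not_monitor hm x y W hWlen hWnot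
  rcases hmon with hmon | hmon
  · exact hmon hreach
  · exact hmon hdist

end MegTorus

namespace MegTorus
set_option linter.unusedSectionVars false

variable {m : ℕ} [NeZero m]

lemma meg_lower (hm : 5 ≤ m) {S : Set (Fin m × Fin m)} (hS : IsMEGSet (TG m) S) :
    3 * m ≤ S.ncard := by
  classical
  haveI : Fintype S := Fintype.ofFinite _
  rw [Set.ncard_eq_toFinset_card']
  rw [Finset.card_eq_sum_card_fiberwise (f := Prod.fst) (s := S.toFinset)
    (t := (Finset.univ : Finset (Fin m))) (fun x _ => Finset.mem_univ _)]
  have h3 : ∀ r : Fin m, 3 ≤ (S.toFinset.filter (fun v => v.1 = r)).card :=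
    fun r => row_three hm hS r
  calc 3 * m = ∑ _r : Fin m, 3 := by simp [mul_comm]
    _ ≤ ∑ r : Fin m, (S.toFinset.filter (fun v => v.1 = r)).card :=
        Finset.sum_le_sum (fun r _ => h3 r)

end MegTorus


theorem meg_torus (m : ℕ) (hm : 5 ≤ m) :
    meg (cycleGraph m □ cycleGraph m) = 3 * m := by
  haveI : NeZero m := ⟨by omega⟩
  have hmem : 3 * m ∈ {n | ∃ S : Set (Fin m × Fin m),
      IsMEGSet (cycleGraph m □ cycleGraph m) S ∧ S.ncard = n} :=
    ⟨MegTorus.megSet m, MegTorus.megSet_isMEG hm, MegTorus.megSet_ncard hm⟩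
  unfold meg
  apply le_antisymm
  · exact Nat.sInf_le hmem
  · obtain ⟨S, hS, hcard⟩ := Nat.sInf_mem ⟨3 * m, hmem⟩
    rw [← hcard]
    exact MegTorus.meg_lower hm hS
end

section
/- Let G be a finite connected simple graph of diameter 2. Then every MEG-set of G is a vertex cover of G (a set of vertices containing at least one endpoint of every edge). -/
open SimpleGraph

infixl:70 " ⊠ " => strongProd

/-- A vertex cover: a set of vertices containing at least one endpoint of every edge. -/
def IsVertexCover {V : Type*} (G : SimpleGraph V) (C : Set V) : Prop :=
  ∀ e ∈ G.edgeSet, ∃ v ∈ C, v ∈ e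

lemma endpoint_mem_of_mem_edges_of_length_le_two {V : Type*} {G : SimpleGraph V}
    {x y : V} (p : G.Walk x y) (hlen : p.length ≤ 2) {e : Sym2 V}
    (he : e ∈ p.edges) : x ∈ e ∨ y ∈ e := by
  cases p with
  | nil => simp at he
  | cons h q =>
    rename_i b
    rw [SimpleGraph.Walk.edges_cons, List.mem_cons] at he
    rcases he with he | he
    · left; rw [he]; exact Sym2.mem_mk_left _ _
    · cases q with
      | nil => simp at he
      | cons h' q' =>
        cases q' with
        | nil =>
          rw [SimpleGraph.Walk.edges_cons] at he
          simp at he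
          right; rw [he]; exact Sym2.mem_mk_right _ _
        | cons h'' q'' => simp [SimpleGraph.Walk.length_cons] at hlen

theorem isVertexCover_of_isMEGSet_of_diam_two {V : Type*} [Fintype V]
    (G : SimpleGraph V) (hG : G.Connected) (hdiam : G.diam = 2) :
    ∀ S : Set V, IsMEGSet G S → _root_.IsVertexCover G S := by
  intro S hS e he
  obtain ⟨x, hx, y, hy, hxy⟩ := hS e he
  obtain ⟨p, hp⟩ := hG.exists_walk_length_eq_dist x y
  by_cases hep : e ∈ p.edges
  · -- then e lies on a shortest path of length ≤ 2
    have hlen : p.length ≤ 2 := by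
      rw [hp]
      have := G.dist_le_diam (u := x) (v := y)
        (G.ediam_ne_top_of_diam_ne_zero (by omega))
      omega
    rcases endpoint_mem_of_mem_edges_of_length_le_two p hlen hep with h | h
    · exact ⟨x, hx, h⟩
    · exact ⟨y, hy, h⟩
  · -- otherwise dist unchanged, contradiction
    exfalso
    have hp' : ∀ e' ∈ p.edges, e' ∉ ({e} : Set (Sym2 V)) := by
      intro e' he' hmem
      exact hep (Set.mem_singleton_iff.mp hmem ▸ he')
    let q := p.toDeleteEdges {e} hp'
    have hq : q.length = p.length := by
      simp [q, SimpleGraph.Walk.toDeleteEdges]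
    have hreach : (G.deleteEdges {e}).Reachable x y := ⟨q⟩
    have hle : (G.deleteEdges {e}).dist x y ≤ G.dist x y := by
      calc (G.deleteEdges {e}).dist x y ≤ q.length :=
            SimpleGraph.dist_le q
        _ = G.dist x y := by rw [hq, hp]
    have hge : G.dist x y ≤ (G.deleteEdges {e}).dist x y := by
      obtain ⟨r, hr⟩ := hreach.exists_walk_length_eq_dist
      calc G.dist x y ≤ (r.mapLe (G.deleteEdges_le (s := {e}))).length :=
            SimpleGraph.dist_le _
        _ = (G.deleteEdges {e}).dist x y := by
            rw [SimpleGraph.Walk.length_map, hr]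
    rcases hxy with h | h
    · exact h hreach
    · exact h (le_antisymm hle hge)
end

section
/- Let G be a finite connected simple graph of diameter 2. Then meg(G) ≥ τ(G), where τ(G) is the vertex cover number of G. -/
open SimpleGraph

infixl:70 " ⊠ " => strongProd

/-- The vertex cover number: the minimum cardinality of a vertex cover. -/
noncomputable def vertexCoverNumber {V : Type*} [Fintype V] (G : SimpleGraph V) : ℕ :=
  sInf {n | ∃ C : Set V, _root_.IsVertexCover G C ∧ C.ncard = n}


lemma walk_endpoint_mem_edge {V : Type*} {G : SimpleGraph V} {x y : V}
    (p : G.Walk x y) (hp : p.length ≤ 2) {e : Sym2 V} (he : e ∈ p.edges) :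
    x ∈ e ∨ y ∈ e := by
  cases p with
  | nil => simp at he
  | cons h q =>
    cases q with
    | nil =>
      simp only [Walk.edges_cons, Walk.edges_nil, List.mem_singleton] at he
      subst he; left; exact Sym2.mem_mk_left _ _
    | cons h2 r =>
      cases r with
      | nil =>
        simp only [Walk.edges_cons, Walk.edges_nil, List.mem_cons, List.mem_singleton,
          List.not_mem_nil, or_false] at he
        rcases he with he | he
        · subst he; left; exact Sym2.mem_mk_left _ _
        · subst he; right; exact Sym2.mem_mk_right _ _
      | cons h3 s => simp [Walk.length_cons] at hp

lemma edge_mem_of_shortest {V : Type*} {G : SimpleGraph V} {x y : V} {e : Sym2 V}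
    (h : ¬ (G.deleteEdges {e}).Reachable x y ∨ (G.deleteEdges {e}).dist x y ≠ G.dist x y)
    (p : G.Walk x y) (hp : p.length = G.dist x y) : e ∈ p.edges := by
  by_contra hne
  have hpe : ∀ e' ∈ p.edges, e' ∉ ({e} : Set (Sym2 V)) := by
    intro e' he' hmem
    rw [Set.mem_singleton_iff] at hmem
    exact hne (hmem ▸ he')
  have hr : (G.deleteEdges {e}).Reachable x y := ⟨p.toDeleteEdges {e} hpe⟩
  rcases h with h | h
  · exact h hr
  · apply h
    apply le_antisymm
    · calc (G.deleteEdges {e}).dist x y ≤ (p.toDeleteEdges {e} hpe).length := dist_le _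
        _ = p.length := Walk.length_transfer _ _
        _ = G.dist x y := hp
    · obtain ⟨w, hw⟩ := hr.exists_walk_length_eq_dist
      calc G.dist x y ≤ (w.mapLe (G.deleteEdges_le _)).length := dist_le _
        _ = w.length := Walk.length_map _ _
        _ = (G.deleteEdges {e}).dist x y := hw

theorem vertexCoverNumber_le_meg_of_diam_two {V : Type*} [Fintype V]
    (G : SimpleGraph V) (hG : G.Connected) (hdiam : G.diam = 2) :
    vertexCoverNumber G ≤ meg G := by
  have hne : {n | ∃ S : Set V, IsMEGSet G S ∧ S.ncard = n}.Nonempty := by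
    refine ⟨(Set.univ : Set V).ncard, Set.univ, ?_, rfl⟩
    intro e he
    induction e with
    | h u v =>
      refine ⟨u, trivial, v, trivial, Or.inr ?_⟩
      have hadj : G.Adj u v := he
      rw [dist_eq_one_iff_adj.mpr hadj]
      intro hd
      have h2 : (G.deleteEdges {s(u, v)}).Adj u v := dist_eq_one_iff_adj.mp hd
      simp [deleteEdges_adj] at h2
  obtain ⟨S, hS, hcard⟩ := Nat.sInf_mem hne
  refine Nat.sInf_le ⟨S, ?_, hcard⟩
  intro e he
  by_contra hc
  push_neg at hc
  obtain ⟨x, hx, y, hy, hxy⟩ := hS e he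
  obtain ⟨p, hp⟩ := (hG.preconnected x y).exists_walk_length_eq_dist
  have hep := edge_mem_of_shortest hxy p hp
  have hlen : p.length ≤ 2 := by
    rw [hp]
    calc G.dist x y ≤ G.diam :=
          dist_le_diam (ediam_ne_top_of_diam_ne_zero (by rw [hdiam]; norm_num))
      _ = 2 := hdiam
  rcases walk_endpoint_mem_edge p hlen hep with h | h
  · exact hc x hx h
  · exact hc y hy h
end

section
/- Let G be the graph on vertex set {a, b, c, d, e, a', b'} consisting of the 5-cycle a–b–c–d–e–a together with pendant edges a–a' and b–b'. Then S = {a', b', d} is the unique MEG-set of G of minimum cardinality (so meg(G) = 3), and T = {a', b', c, e} is also a minimal MEG-set of G (an MEG-set none of whose proper subsets is an MEG-set); in particular G has a unique minimum MEG-set but not a unique minimal MEG-set. -/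
open SimpleGraph

infixl:70 " ⊠ " => strongProd

/-- The graph on vertices `0,…,6` (with `a = 0`, `b = 1`, `c = 2`, `d = 3`, `e = 4`,
`a' = 5`, `b' = 6`) given by the 5-cycle `a b c d e` plus pendant edges `a a'`, `b b'`. -/
def pendantCycleGraph : SimpleGraph (Fin 7) :=
  SimpleGraph.fromEdgeSet
    {s(0, 1), s(1, 2), s(2, 3), s(3, 4), s(4, 0), s(0, 5), s(1, 6)}

section machinery
variable {V : Type*} [Fintype V] [DecidableEq V] (G : SimpleGraph V) [DecidableRel G.Adj]

/-- `reachB G k x y` : there is a walk from `x` to `y` of length at most `k` (as a `Bool`). -/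
def reachB : ℕ → V → V → Bool
  | 0, x, y => decide (x = y)
  | (k+1), x, y => decide (x = y) || decide (∃ z, G.Adj x z ∧ reachB k z y = true)

lemma reachB_iff (k : ℕ) (x y : V) :
    reachB G k x y = true ↔ ∃ w : G.Walk x y, w.length ≤ k := by
  induction k generalizing x y with
  | zero =>
      simp only [reachB, decide_eq_true_iff]
      constructor
      · rintro rfl; exact ⟨Walk.nil, by simp⟩
      · rintro ⟨w, hw⟩
        exact w.eq_of_length_eq_zero (Nat.le_zero.mp hw)
  | succ k ih =>
      simp only [reachB, Bool.or_eq_true, decide_eq_true_iff]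
      constructor
      · rintro (rfl | ⟨z, hz, hr⟩)
        · exact ⟨Walk.nil, by simp⟩
        · obtain ⟨w, hw⟩ := (ih _ _).mp hr
          exact ⟨Walk.cons hz w, by simpa using Nat.succ_le_succ hw⟩
      · rintro ⟨w, hw⟩
        cases w with
        | nil => exact Or.inl rfl
        | cons h p =>
            exact Or.inr ⟨_, h, (ih _ _).mpr ⟨p, Nat.le_of_succ_le_succ (by simpa using hw)⟩⟩

lemma reachable_of_reachB {k : ℕ} {x y : V} (h : reachB G k x y = true) : G.Reachable x y := by
  obtain ⟨w, -⟩ := (reachB_iff G k x y).mp h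
  exact ⟨w⟩

lemma not_reachable_of_reachB {x y : V} (h : reachB G (Fintype.card V - 1) x y = false) :
    ¬ G.Reachable x y := by
  intro hr
  obtain ⟨w⟩ := hr
  have : reachB G (Fintype.card V - 1) x y = true :=
    (reachB_iff G _ x y).mpr ⟨w.toPath.1, Nat.le_sub_one_of_lt w.toPath.2.length_lt⟩
  simp [this] at h

/-- `distIs G k x y` : decidable certificate that `G.dist x y = k`. -/
def distIs (k : ℕ) (x y : V) : Prop :=
  reachB G k x y = true ∧ (k = 0 ∨ reachB G (k-1) x y = false)

instance (k : ℕ) (x y : V) : Decidable (distIs G k x y) := by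
  unfold distIs; infer_instance

lemma dist_of_distIs {k : ℕ} {x y : V} (h : distIs G k x y) : G.dist x y = k := by
  obtain ⟨h1, h2⟩ := h
  rcases h2 with rfl | h2
  · obtain rfl : x = y := by simpa [reachB] using h1
    simp
  · obtain ⟨w, hw⟩ := (reachB_iff G _ x y).mp h1
    have hle : G.dist x y ≤ k := le_trans (SimpleGraph.dist_le w) hw
    rcases eq_or_lt_of_le hle with h | h
    · exact h
    · exfalso
      obtain ⟨w', hw'⟩ := (Reachable.exists_walk_length_eq_dist ⟨w⟩ : _)
      have : reachB G (k-1) x y = true := (reachB_iff G _ x y).mpr ⟨w', by omega⟩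
      simp [this] at h2

lemma reachable_of_distIs {k : ℕ} {x y : V} (h : distIs G k x y) : G.Reachable x y :=
  reachable_of_reachB G h.1

/-- Decidable certificate that `x, y` are reachable in both `G`, `G'` with equal distances. -/
def eqDist (G' : SimpleGraph V) [DecidableRel G'.Adj] (x y : V) : Prop :=
  ∃ k : Fin (Fintype.card V), distIs G k x y ∧ distIs G' k x y

instance (G' : SimpleGraph V) [DecidableRel G'.Adj] (x y : V) : Decidable (eqDist G G' x y) := by
  unfold eqDist; infer_instance

lemma eqDist_elim {G' : SimpleGraph V} [DecidableRel G'.Adj] {x y : V}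
    (h : eqDist G G' x y) : G'.Reachable x y ∧ G'.dist x y = G.dist x y := by
  obtain ⟨k, h1, h2⟩ := h
  exact ⟨reachable_of_distIs G' h2, by rw [dist_of_distIs G' h2, dist_of_distIs G h1]⟩

instance instDelAdjDec (e : Sym2 V) : DecidableRel (G.deleteEdges {e}).Adj := fun x y =>
  decidable_of_iff (G.Adj x y ∧ ¬ s(x,y) = e) (by simp)

lemma mon (e : Sym2 V) {x y : V} {k m : ℕ}
    (h1 : distIs (G.deleteEdges {e}) k x y) (h2 : distIs G m x y) (hkm : k ≠ m) :
    ¬ (G.deleteEdges {e}).Reachable x y ∨ (G.deleteEdges {e}).dist x y ≠ G.dist x y :=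
  Or.inr (by rw [dist_of_distIs _ h1, dist_of_distIs _ h2]; exact hkm)

lemma notMon {e : Sym2 V} {x y : V} (h : eqDist G (G.deleteEdges {e}) x y) :
    ¬ (¬ (G.deleteEdges {e}).Reachable x y ∨ (G.deleteEdges {e}).dist x y ≠ G.dist x y) := by
  obtain ⟨hr, hd⟩ := eqDist_elim G h
  rintro (h' | h')
  · exact h' hr
  · exact h' hd

end machinery

instance : DecidableRel pendantCycleGraph.Adj := fun x y =>
  decidable_of_iff
    ((s(x,y) = s(0,1) ∨ s(x,y) = s(1,2) ∨ s(x,y) = s(2,3) ∨ s(x,y) = s(3,4) ∨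
      s(x,y) = s(4,0) ∨ s(x,y) = s(0,5) ∨ s(x,y) = s(1,6)) ∧ x ≠ y)
    (by rw [pendantCycleGraph, SimpleGraph.fromEdgeSet_adj]; simp [Set.mem_insert_iff])

lemma pendant_edge_cases {e : Sym2 (Fin 7)} (he : e ∈ pendantCycleGraph.edgeSet) :
    e = s(0,1) ∨ e = s(1,2) ∨ e = s(2,3) ∨ e = s(3,4) ∨ e = s(4,0) ∨ e = s(0,5) ∨
      e = s(1,6) := by
  rw [pendantCycleGraph, SimpleGraph.edgeSet_fromEdgeSet] at he
  simp only [Set.mem_diff, Set.mem_insert_iff, Set.mem_singleton_iff] at he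
  tauto

lemma third_elem : ∀ a b c : Fin 7, a ≠ b → a ≠ c → b ≠ c →
    (5 = a ∨ 5 = b ∨ 5 = c) → (6 = a ∨ 6 = b ∨ 6 = c) →
    ∃ v : Fin 7, ∀ x : Fin 7, (x = a ∨ x = b ∨ x = c) ↔ (x = 5 ∨ x = 6 ∨ x = v) := by
  decide

theorem pendantCycle_unique_minimum_not_unique_minimal :
    IsMEGSet pendantCycleGraph ({5, 6, 3} : Set (Fin 7)) ∧
    meg pendantCycleGraph = 3 ∧
    (∀ R : Set (Fin 7), IsMEGSet pendantCycleGraph R → R.ncard = 3 →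
      R = ({5, 6, 3} : Set (Fin 7))) ∧
    IsMEGSet pendantCycleGraph ({5, 6, 2, 4} : Set (Fin 7)) ∧
    (∀ R : Set (Fin 7), R ⊂ ({5, 6, 2, 4} : Set (Fin 7)) →
      ¬ IsMEGSet pendantCycleGraph R) ∧
    ¬ ∃ S₀ : Set (Fin 7), IsMEGSet pendantCycleGraph S₀ ∧
      ∀ R : Set (Fin 7), IsMEGSet pendantCycleGraph R → S₀ ⊆ R := by
  set G := pendantCycleGraph with hG
  -- the two MEG-sets
  have hS : IsMEGSet G ({5, 6, 3} : Set (Fin 7)) := by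
    intro e he
    rcases pendant_edge_cases he with rfl | rfl | rfl | rfl | rfl | rfl | rfl
    · exact ⟨5, by simp, 6, by simp,
        mon G _ (by decide : distIs (G.deleteEdges {s(0,1)}) 6 5 6)
          (by decide : distIs G 3 5 6) (by decide)⟩
    · exact ⟨6, by simp, 3, by simp,
        mon G _ (by decide : distIs (G.deleteEdges {s(1,2)}) 4 6 3)
          (by decide : distIs G 3 6 3) (by decide)⟩
    · exact ⟨6, by simp, 3, by simp,
        mon G _ (by decide : distIs (G.deleteEdges {s(2,3)}) 4 6 3)
          (by decide : distIs G 3 6 3) (by decide)⟩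
    · exact ⟨5, by simp, 3, by simp,
        mon G _ (by decide : distIs (G.deleteEdges {s(3,4)}) 4 5 3)
          (by decide : distIs G 3 5 3) (by decide)⟩
    · exact ⟨5, by simp, 3, by simp,
        mon G _ (by decide : distIs (G.deleteEdges {s(4,0)}) 4 5 3)
          (by decide : distIs G 3 5 3) (by decide)⟩
    · exact ⟨5, by simp, 3, by simp, Or.inl (not_reachable_of_reachB _
        (by decide : reachB (G.deleteEdges {s(0,5)}) (Fintype.card (Fin 7) - 1) 5 3 = false))⟩
    · exact ⟨6, by simp, 3, by simp, Or.inl (not_reachable_of_reachB _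
        (by decide : reachB (G.deleteEdges {s(1,6)}) (Fintype.card (Fin 7) - 1) 6 3 = false))⟩
  have hT : IsMEGSet G ({5, 6, 2, 4} : Set (Fin 7)) := by
    intro e he
    rcases pendant_edge_cases he with rfl | rfl | rfl | rfl | rfl | rfl | rfl
    · exact ⟨5, by simp, 6, by simp,
        mon G _ (by decide : distIs (G.deleteEdges {s(0,1)}) 6 5 6)
          (by decide : distIs G 3 5 6) (by decide)⟩
    · exact ⟨6, by simp, 2, by simp,
        mon G _ (by decide : distIs (G.deleteEdges {s(1,2)}) 5 6 2)
          (by decide : distIs G 2 6 2) (by decide)⟩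
    · exact ⟨2, by simp, 4, by simp,
        mon G _ (by decide : distIs (G.deleteEdges {s(2,3)}) 3 2 4)
          (by decide : distIs G 2 2 4) (by decide)⟩
    · exact ⟨2, by simp, 4, by simp,
        mon G _ (by decide : distIs (G.deleteEdges {s(3,4)}) 3 2 4)
          (by decide : distIs G 2 2 4) (by decide)⟩
    · exact ⟨5, by simp, 4, by simp,
        mon G _ (by decide : distIs (G.deleteEdges {s(4,0)}) 5 5 4)
          (by decide : distIs G 2 5 4) (by decide)⟩
    · exact ⟨5, by simp, 4, by simp, Or.inl (not_reachable_of_reachB _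
        (by decide : reachB (G.deleteEdges {s(0,5)}) (Fintype.card (Fin 7) - 1) 5 4 = false))⟩
    · exact ⟨6, by simp, 4, by simp, Or.inl (not_reachable_of_reachB _
        (by decide : reachB (G.deleteEdges {s(1,6)}) (Fintype.card (Fin 7) - 1) 6 4 = false))⟩
  -- key computed facts about non-monitoring pairs
  have h05 : ∀ x y : Fin 7, x ≠ 5 → y ≠ 5 → eqDist G (G.deleteEdges {s(0,5)}) x y := by decide
  have h16 : ∀ x y : Fin 7, x ≠ 6 → y ≠ 6 → eqDist G (G.deleteEdges {s(1,6)}) x y := by decide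
  have h23 : ∀ v : Fin 7, v ≠ 3 → ∀ x y : Fin 7, (x = 5 ∨ x = 6 ∨ x = v) →
      (y = 5 ∨ y = 6 ∨ y = v) → eqDist G (G.deleteEdges {s(2,3)}) x y := by decide
  have he05 : s(0,5) ∈ G.edgeSet := (SimpleGraph.mem_edgeSet G).mpr (by decide)
  have he16 : s(1,6) ∈ G.edgeSet := (SimpleGraph.mem_edgeSet G).mpr (by decide)
  have he23 : s(2,3) ∈ G.edgeSet := (SimpleGraph.mem_edgeSet G).mpr (by decide)
  -- every MEG-set contains 5 and 6
  have mem5 : ∀ S : Set (Fin 7), IsMEGSet G S → 5 ∈ S := by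
    intro S hSm
    obtain ⟨x, hx, y, hy, h⟩ := hSm s(0,5) he05
    by_cases hx5 : x = 5
    · exact hx5 ▸ hx
    by_cases hy5 : y = 5
    · exact hy5 ▸ hy
    · exact absurd h (notMon G (h05 x y hx5 hy5))
  have mem6 : ∀ S : Set (Fin 7), IsMEGSet G S → 6 ∈ S := by
    intro S hSm
    obtain ⟨x, hx, y, hy, h⟩ := hSm s(1,6) he16
    by_cases hx6 : x = 6
    · exact hx6 ▸ hx
    by_cases hy6 : y = 6
    · exact hy6 ▸ hy
    · exact absurd h (notMon G (h16 x y hx6 hy6))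
  -- every MEG-set has at least 3 elements
  have card_ge : ∀ S : Set (Fin 7), IsMEGSet G S → 3 ≤ S.ncard := by
    intro S hSm
    have h5 := mem5 S hSm
    have h6 := mem6 S hSm
    obtain ⟨x, hx, y, hy, h⟩ := hSm s(2,3) he23
    have hz : ∃ z ∈ S, z ≠ 5 ∧ z ≠ 6 := by
      by_contra hc
      push_neg at hc
      have hx' : x = 5 ∨ x = 6 ∨ x = 5 := by
        rcases eq_or_ne x 5 with rfl | hx5
        · exact Or.inl rfl
        · exact Or.inr (Or.inl (hc x hx hx5))
      have hy' : y = 5 ∨ y = 6 ∨ y = 5 := by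
        rcases eq_or_ne y 5 with rfl | hy5
        · exact Or.inl rfl
        · exact Or.inr (Or.inl (hc y hy hy5))
      exact absurd h (notMon G (h23 5 (by decide) x y hx' hy'))
    obtain ⟨z, hzS, hz5, hz6⟩ := hz
    have hsub : ({5, 6, z} : Set (Fin 7)) ⊆ S :=
      Set.insert_subset h5 (Set.insert_subset h6 (Set.singleton_subset_iff.mpr hzS))
    have hcard : ({5, 6, z} : Set (Fin 7)).ncard = 3 := by
      rw [Set.ncard_insert_of_notMem (by
        simp only [Set.mem_insert_iff, Set.mem_singleton_iff]
        push_neg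
        exact ⟨by decide, Ne.symm hz5⟩),
        Set.ncard_insert_of_notMem (by
          simp only [Set.mem_singleton_iff]
          exact Ne.symm hz6),
        Set.ncard_singleton]
    calc 3 = ({5, 6, z} : Set (Fin 7)).ncard := hcard.symm
      _ ≤ S.ncard := Set.ncard_le_ncard hsub S.toFinite
  have hScard : ({5, 6, 3} : Set (Fin 7)).ncard = 3 := by
    rw [Set.ncard_insert_of_notMem (by
        simp only [Set.mem_insert_iff, Set.mem_singleton_iff]; decide),
      Set.ncard_insert_of_notMem (by
        simp only [Set.mem_singleton_iff]; decide),
      Set.ncard_singleton]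
  have h3mem : 3 ∈ {n | ∃ S : Set (Fin 7), IsMEGSet G S ∧ S.ncard = n} := ⟨_, hS, hScard⟩
  refine ⟨hS, ?_, ?_, hT, ?_, ?_⟩
  · -- meg = 3
    refine le_antisymm (Nat.sInf_le h3mem) (le_csInf ⟨3, h3mem⟩ ?_)
    rintro n ⟨S, hSm, rfl⟩
    exact card_ge S hSm
  · -- uniqueness of the minimum MEG-set
    intro R hR hcard
    have h5 := mem5 R hR
    have h6 := mem6 R hR
    obtain ⟨a, b, c, hab, hac, hbc, rfl⟩ := Set.ncard_eq_three.mp hcard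
    simp only [Set.mem_insert_iff, Set.mem_singleton_iff] at h5 h6
    obtain ⟨v, hv⟩ := third_elem a b c hab hac hbc h5 h6
    have hRv : ({a, b, c} : Set (Fin 7)) = {5, 6, v} := by
      ext x
      simpa only [Set.mem_insert_iff, Set.mem_singleton_iff] using hv x
    by_cases hv3 : v = 3
    · rw [hRv, hv3]
    · exfalso
      obtain ⟨x, hx, y, hy, h⟩ := hR s(2,3) he23
      rw [hRv] at hx hy
      simp only [Set.mem_insert_iff, Set.mem_singleton_iff] at hx hy
      exact absurd h (notMon G (h23 v hv3 x y hx hy))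
  · -- T is a minimal MEG-set
    intro R hRsub hMEG
    have mono : ∀ S S' : Set (Fin 7), S ⊆ S' → IsMEGSet G S → IsMEGSet G S' := by
      intro S S' hss h e he
      obtain ⟨x, hx, y, hy, hc⟩ := h e he
      exact ⟨x, hss hx, y, hss hy, hc⟩
    obtain ⟨t, htT, htR⟩ := Set.exists_of_ssubset hRsub
    simp only [Set.mem_insert_iff, Set.mem_singleton_iff] at htT
    rcases htT with rfl | rfl | rfl | rfl
    · -- 5 ∉ R : R ⊆ {6,2,4}, edge s(0,5) is unmonitored
      have hsub : R ⊆ ({6, 2, 4} : Set (Fin 7)) := by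
        intro z hz
        have h2 := hRsub.1 hz
        simp only [Set.mem_insert_iff, Set.mem_singleton_iff] at h2 ⊢
        rcases h2 with rfl | rfl | rfl | rfl
        · exact absurd hz htR
        · exact Or.inl rfl
        · exact Or.inr (Or.inl rfl)
        · exact Or.inr (Or.inr rfl)
      have hM : IsMEGSet G ({6, 2, 4} : Set (Fin 7)) := mono R _ hsub hMEG
      obtain ⟨x, hx, y, hy, h⟩ := hM s(0,5) he05
      simp only [Set.mem_insert_iff, Set.mem_singleton_iff] at hx hy
      have hx5 : x ≠ 5 := by rcases hx with rfl | rfl | rfl <;> decide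
      have hy5 : y ≠ 5 := by rcases hy with rfl | rfl | rfl <;> decide
      exact absurd h (notMon G (h05 x y hx5 hy5))
    · -- 6 ∉ R : R ⊆ {5,2,4}, edge s(1,6) is unmonitored
      have hsub : R ⊆ ({5, 2, 4} : Set (Fin 7)) := by
        intro z hz
        have h2 := hRsub.1 hz
        simp only [Set.mem_insert_iff, Set.mem_singleton_iff] at h2 ⊢
        rcases h2 with rfl | rfl | rfl | rfl
        · exact Or.inl rfl
        · exact absurd hz htR
        · exact Or.inr (Or.inl rfl)
        · exact Or.inr (Or.inr rfl)
      have hM : IsMEGSet G ({5, 2, 4} : Set (Fin 7)) := mono R _ hsub hMEG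
      obtain ⟨x, hx, y, hy, h⟩ := hM s(1,6) he16
      simp only [Set.mem_insert_iff, Set.mem_singleton_iff] at hx hy
      have hx6 : x ≠ 6 := by rcases hx with rfl | rfl | rfl <;> decide
      have hy6 : y ≠ 6 := by rcases hy with rfl | rfl | rfl <;> decide
      exact absurd h (notMon G (h16 x y hx6 hy6))
    · -- 2 ∉ R : R ⊆ {5,6,4}, edge s(2,3) is unmonitored
      have hsub : R ⊆ ({5, 6, 4} : Set (Fin 7)) := by
        intro z hz
        have h2 := hRsub.1 hz
        simp only [Set.mem_insert_iff, Set.mem_singleton_iff] at h2 ⊢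
        rcases h2 with rfl | rfl | rfl | rfl
        · exact Or.inl rfl
        · exact Or.inr (Or.inl rfl)
        · exact absurd hz htR
        · exact Or.inr (Or.inr rfl)
      have hM : IsMEGSet G ({5, 6, 4} : Set (Fin 7)) := mono R _ hsub hMEG
      obtain ⟨x, hx, y, hy, h⟩ := hM s(2,3) he23
      simp only [Set.mem_insert_iff, Set.mem_singleton_iff] at hx hy
      exact absurd h (notMon G (h23 4 (by decide) x y hx hy))
    · -- 4 ∉ R : R ⊆ {5,6,2}, edge s(2,3) is unmonitored
      have hsub : R ⊆ ({5, 6, 2} : Set (Fin 7)) := by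
        intro z hz
        have h2 := hRsub.1 hz
        simp only [Set.mem_insert_iff, Set.mem_singleton_iff] at h2 ⊢
        rcases h2 with rfl | rfl | rfl | rfl
        · exact Or.inl rfl
        · exact Or.inr (Or.inl rfl)
        · exact Or.inr (Or.inr rfl)
        · exact absurd hz htR
      have hM : IsMEGSet G ({5, 6, 2} : Set (Fin 7)) := mono R _ hsub hMEG
      obtain ⟨x, hx, y, hy, h⟩ := hM s(2,3) he23
      simp only [Set.mem_insert_iff, Set.mem_singleton_iff] at hx hy
      exact absurd h (notMon G (h23 2 (by decide) x y hx hy))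
  · -- no minimum MEG-set contained in all MEG-sets
    rintro ⟨S₀, hS₀, hmin⟩
    have hsub1 := hmin _ hS
    have hsub2 := hmin _ hT
    obtain ⟨x, hx, y, hy, h⟩ := hS₀ s(2,3) he23
    have hx' : x = 5 ∨ x = 6 := by
      have a := hsub1 hx
      have b := hsub2 hx
      simp only [Set.mem_insert_iff, Set.mem_singleton_iff] at a b
      rcases a with rfl | rfl | rfl
      · exact Or.inl rfl
      · exact Or.inr rfl
      · exact absurd b (by decide)
    have hy' : y = 5 ∨ y = 6 := by
      have a := hsub1 hy
      have b := hsub2 hy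
      simp only [Set.mem_insert_iff, Set.mem_singleton_iff] at a b
      rcases a with rfl | rfl | rfl
      · exact Or.inl rfl
      · exact Or.inr rfl
      · exact absurd b (by decide)
    exact absurd h (notMon G (h23 5 (by decide) x y (hx'.imp id Or.inl) (hy'.imp id Or.inl)))
end
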